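/- arXiv:2405.12597 — 5 statements merged into one kernel-verified Lean document; each statement's English description precedes it below -/
import Mathlib

section
/- Let G be a group and let α, β ∈ G be two elements of infinite order. Then there exist a group H, an injective group homomorphism ι : G → H, and an element t ∈ H such that t⁻¹ ι(α) t = ι(β). -/
/-- The homomorphism `Multiplicative ℤ →* Subgroup.zpowers α`. -/
def zpowHom {G : Type u} [Group G] (α : G) : Multiplicative ℤ →* Subgroup.zpowers α where
  toFun n := ⟨α ^ n.toAdd, Subgroup.zpow_mem _ (Subgroup.mem_zpowers α) _⟩
  map_one' := by ext; simp
  map_mul' m n := by ext; simp [zpow_add]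

theorem zpowHom_bijective {G : Type u} [Group G] (α : G)
    (hα : ∀ n : ℤ, α ^ n = 1 → n = 0) : Function.Bijective (zpowHom α) := by
  constructor
  · intro m n h
    have : α ^ (m.toAdd - n.toAdd) = 1 := by
      have := congrArg Subtype.val h
      simp only [zpowHom, MonoidHom.coe_mk, OneHom.coe_mk] at this
      rw [zpow_sub, this, mul_inv_cancel]
    have := hα _ this
    have : m.toAdd = n.toAdd := by omega
    exact Multiplicative.toAdd.injective this
  · rintro ⟨x, k, rfl⟩
    exact ⟨Multiplicative.ofAdd k, rfl⟩

/-- Two elements of infinite order of a group become conjugate in some overgroup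
(realized by an HNN extension). -/
theorem stmt2 (G : Type u) [Group G] (α β : G)
    (hα : ∀ n : ℤ, α ^ n = 1 → n = 0)
    (hβ : ∀ n : ℤ, β ^ n = 1 → n = 0) :
    ∃ (H : Type u) (_ : Group H) (ι : G →* H) (t : H),
      Function.Injective ι ∧ t⁻¹ * ι α * t = ι β := by
  let eα := MulEquiv.ofBijective _ (zpowHom_bijective α hα)
  let eβ := MulEquiv.ofBijective _ (zpowHom_bijective β hβ)
  let φ : Subgroup.zpowers β ≃* Subgroup.zpowers α := eβ.symm.trans eα
  refine ⟨HNNExtension G (Subgroup.zpowers β) (Subgroup.zpowers α) φ, inferInstance,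
    HNNExtension.of, HNNExtension.t, HNNExtension.of_injective φ, ?_⟩
  have hb : (⟨β, Subgroup.mem_zpowers β⟩ : Subgroup.zpowers β) = eβ (Multiplicative.ofAdd 1) := by
    ext; simp [eβ, MulEquiv.ofBijective, zpowHom]
  have hφ : ((φ ⟨β, Subgroup.mem_zpowers β⟩ : Subgroup.zpowers α) : G) = α := by
    have : φ ⟨β, Subgroup.mem_zpowers β⟩ = eα (Multiplicative.ofAdd 1) := by
      simp [φ, hb]
    rw [this]
    simp [eα, MulEquiv.ofBijective, zpowHom]
  have := HNNExtension.equiv_eq_conj (φ := φ) ⟨β, Subgroup.mem_zpowers β⟩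
  rw [hφ] at this
  rw [this]
  group
end

section
/- Let G be a torsion-free group, let A and B be subgroups of G, and let φ : A → B be a group isomorphism. Then the HNN extension of G with associated subgroups A and B along φ is torsion-free. -/
open HNNExtension HNNExtension.NormalWord

namespace HNNTorsionFreeAux

variable {G : Type*} [Group G] {A B : Subgroup G} (φ : A ≃* B)

/-- product of a list of letters -/
private def pr (L : List (ℤˣ × G)) : HNNExtension G A B φ :=
  (L.map (fun x => t ^ (x.1 : ℤ) * of x.2)).prod

@[simp] private lemma pr_nil : pr φ ([] : List (ℤˣ × G)) = 1 := rfl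

private lemma pr_cons (a : ℤˣ × G) (L : List (ℤˣ × G)) :
    pr φ (a :: L) = t ^ (a.1 : ℤ) * of a.2 * pr φ L := by
  simp [pr]

private lemma pr_append (L₁ L₂ : List (ℤˣ × G)) :
    pr φ (L₁ ++ L₂) = pr φ L₁ * pr φ L₂ := by
  simp [pr]

private lemma prod_eq (w : ReducedWord G A B) :
    w.prod φ = of w.head * pr φ w.toList := rfl

private lemma tpow_mul_of {u : ℤˣ} {g : G} (hg : g ∈ toSubgroup A B u) :
    (t ^ (u : ℤ) : HNNExtension G A B φ) * of g
      = of (toSubgroupEquiv φ u ⟨g, hg⟩ : G) * t ^ (u : ℤ) := by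
  rcases Int.units_eq_one_or u with rfl | rfl
  · simp; exact t_mul_of (φ := φ) ⟨g, hg⟩
  · simp; exact inv_t_mul_of (φ := φ) ⟨g, hg⟩

private lemma units_cases (u v : ℤˣ) : v = u ∨ v = -u := by
  rcases Int.units_eq_one_or u with rfl | rfl <;>
    rcases Int.units_eq_one_or v with rfl | rfl <;> simp

private lemma tpow_mul_tpow_neg (u : ℤˣ) :
    (t ^ (u : ℤ) : HNNExtension G A B φ) * t ^ ((-u : ℤˣ) : ℤ) = 1 := by
  rw [Units.val_neg, zpow_neg, mul_inv_cancel]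

/-- the chain relation used for reduced words -/
private def R : ℤˣ × G → ℤˣ × G → Prop :=
  fun a b => a.2 ∈ toSubgroup A B a.1 → a.1 = b.1

/-- a cyclically reduced word of positive length has infinite order -/
private lemma no_small_order (hd : G) (L : List (ℤˣ × G)) (h0 : L ≠ [])
    (chain : L.Chain' (R (A := A) (B := B)))
    (hcyc : ∀ p ∈ L.head?, ∀ q ∈ L.getLast?,
      q.2 * hd ∈ toSubgroup A B q.1 → q.1 = p.1) :
    ¬ IsOfFinOrder (of hd * pr φ L) := by
  intro hfin
  obtain ⟨n, hn, hxn⟩ := isOfFinOrder_iff_pow_eq_one.1 hfin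
  obtain ⟨M, lst, rfl⟩ : ∃ M lst, L = M ++ [lst] :=
    ⟨_, _, (List.dropLast_append_getLast h0).symm⟩
  have hgl : (M ++ [lst]).getLast? = some lst := List.getLast?_concat
  set L' : List (ℤˣ × G) := M ++ [(lst.1, lst.2 * hd)] with hL'
  have hL'ne : L' ≠ [] := by simp [hL']
  have hjunct : ∀ p ∈ (M ++ [lst]).head?,
      R (A := A) (B := B) (lst.1, lst.2 * hd) p :=
    fun p hp hmem => hcyc p hp lst hgl hmem
  have hprL' : pr φ L' = pr φ (M ++ [lst]) * of hd := by
    rw [hL', pr_append, pr_append, pr_cons, pr_cons, pr_nil]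
    simp [mul_assoc]
  have hchainL' : L'.Chain' (R (A := A) (B := B)) := by
    rw [hL']; unfold List.Chain'; rw [List.isChain_append]
    refine ⟨(List.isChain_append.1 chain).1, List.isChain_singleton _, ?_⟩
    intro x hx y hy
    simp only [List.head?_cons, Option.mem_some_iff] at hy
    subst hy
    exact fun hmem => ((List.isChain_append.1 chain).2.2 x hx lst (by simp)) hmem
  have hheadL' : ∀ p ∈ L'.head?, R (A := A) (B := B) (lst.1, lst.2 * hd) p := by
    intro p hp
    rcases eq_or_ne M [] with rfl | hne
    · simp only [hL', List.nil_append, List.head?_cons, Option.mem_some_iff] at hp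
      subst hp
      exact fun _ => rfl
    · rw [hL', List.head?_append_of_ne_nil _ hne] at hp
      exact hjunct p (by rw [List.head?_append_of_ne_nil _ hne]; exact hp)
  -- the iterated word representing powers
  set bigL : ℕ → List (ℤˣ × G) :=
    fun m => Nat.rec (M ++ [lst]) (fun _ ihl => L' ++ ihl) m with hbigL
  have hbig0 : bigL 0 = M ++ [lst] := rfl
  have hbigS : ∀ m, bigL (m + 1) = L' ++ bigL m := fun _ => rfl
  have hbigne : ∀ m, bigL m ≠ [] := by
    intro m; cases m with
    | zero => simp only [hbig0]; exact h0
    | succ m => rw [hbigS]; simp [hL']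
  have hbighead : ∀ m, ∀ p ∈ (bigL m).head?,
      R (A := A) (B := B) (lst.1, lst.2 * hd) p := by
    intro m
    cases m with
    | zero => exact hjunct
    | succ m =>
      rw [hbigS, List.head?_append_of_ne_nil _ hL'ne]
      exact hheadL'
  have hbigchain : ∀ m, (bigL m).Chain' (R (A := A) (B := B)) := by
    intro m
    induction m with
    | zero => exact chain
    | succ m ihm =>
      rw [hbigS]; unfold List.Chain'; rw [List.isChain_append]
      refine ⟨hchainL', ihm, ?_⟩
      intro x hx y hy
      rw [hL', List.getLast?_concat, Option.mem_some_iff] at hx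
      subst hx
      exact hbighead m y hy
  have hbigprod : ∀ m, (of hd * pr φ (M ++ [lst])) ^ (m + 1)
      = of hd * pr φ (bigL m) := by
    intro m
    induction m with
    | zero => rw [hbig0, pow_one]
    | succ m ihm =>
      rw [pow_succ', ihm, hbigS, pr_append φ L', hprL']
      simp [mul_assoc]
  obtain ⟨m, rfl⟩ : ∃ m, n = m + 1 := ⟨n - 1, by omega⟩
  have hbprod : (⟨hd, bigL m, hbigchain m⟩ : ReducedWord G A B).prod φ = 1 := by
    rw [prod_eq, ← hbigprod m, hxn]
  have := ReducedWord.toList_eq_nil_of_mem_of_range φ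
    (⟨hd, bigL m, hbigchain m⟩ : ReducedWord G A B)
    (by rw [hbprod]; exact one_mem _)
  exact hbigne m this

private lemma key : ∀ (k : ℕ) (w : ReducedWord G A B), w.toList.length ≤ k →
    IsOfFinOrder (w.prod φ) → ∃ g : G, IsConj (w.prod φ) (of g) := by
  intro k
  induction k with
  | zero =>
    intro w hw _
    have h0 : w.toList = [] := List.length_eq_zero_iff.1 (Nat.le_zero.1 hw)
    exact ⟨w.head, by rw [prod_eq, h0, pr_nil, mul_one]⟩
  | succ k ih =>
    rintro ⟨hd, L, chain⟩ hw hfin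
    simp only [prod_eq] at hfin ⊢
    by_cases h0 : L = []
    · subst h0
      exact ⟨hd, by rw [pr_nil, mul_one]⟩
    obtain ⟨M, lst, rfl⟩ : ∃ M lst, L = M ++ [lst] :=
      ⟨_, _, (List.dropLast_append_getLast h0).symm⟩
    rcases M with _ | ⟨f, M'⟩
    · -- a single letter: always cyclically reduced
      exact absurd hfin (no_small_order φ hd _ h0 chain (by
        intro p hp q hq hmem
        simp only [List.nil_append, List.head?_cons, List.getLast?_singleton,
          Option.mem_some_iff] at hp hq
        subst hp; subst hq; rfl))
    by_cases hred : lst.2 * hd ∈ toSubgroup A B lst.1 ∧ f.1 = -lst.1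
    · -- not cyclically reduced: conjugate to a shorter word
      obtain ⟨hmem, hu⟩ := hred
      set a' : G := (toSubgroupEquiv φ lst.1 ⟨lst.2 * hd, hmem⟩ : G) with ha'
      set c : HNNExtension G A B φ := t ^ (lst.1 : ℤ) * of lst.2 with hc
      have hchainM' : M'.Chain' (R (A := A) (B := B)) :=
        (chain.tail).prefix ⟨[lst], rfl⟩
      set w2 : ReducedWord G A B := ⟨a' * f.2, M', hchainM'⟩ with hw2
      have hy : SemiconjBy c (of hd * pr φ (f :: M' ++ [lst])) (w2.prod φ) := by
      -- c * x = y * c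
        show c * _ = _ * c
        rw [prod_eq, pr_append, pr_cons, pr_cons, pr_nil, hc]
        calc t ^ (lst.1 : ℤ) * of lst.2 *
              (of hd * (t ^ (f.1 : ℤ) * of f.2 * pr φ M' *
                (t ^ (lst.1 : ℤ) * of lst.2 * 1)))
            = (t ^ (lst.1 : ℤ) * of (lst.2 * hd)) * t ^ (f.1 : ℤ) *
              (of f.2 * pr φ M' * (t ^ (lst.1 : ℤ) * of lst.2)) := by
              simp [mul_assoc]
          _ = of a' * (t ^ (lst.1 : ℤ) * t ^ (f.1 : ℤ)) *
              (of f.2 * pr φ M' * (t ^ (lst.1 : ℤ) * of lst.2)) := by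
              rw [tpow_mul_of φ hmem, ← ha']
              simp [mul_assoc]
          _ = of (a' * f.2) * pr φ M' * (t ^ (lst.1 : ℤ) * of lst.2) := by
              rw [hu, tpow_mul_tpow_neg]
              simp [mul_assoc]
      have hlen : w2.toList.length ≤ k := by
        simp only [List.length_append, List.length_cons] at hw
        show M'.length ≤ k
        omega
      have hfin2 : IsOfFinOrder (w2.prod φ) := by
        obtain ⟨n, hn, hxn⟩ := isOfFinOrder_iff_pow_eq_one.1 hfin
        refine isOfFinOrder_iff_pow_eq_one.2 ⟨n, hn, ?_⟩
        have h2 := (hy.pow_right n).eq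
        rw [hxn, mul_one] at h2
        exact mul_eq_right.1 h2.symm
      obtain ⟨g, hg⟩ := ih w2 hlen hfin2
      refine ⟨g, IsConj.trans ?_ hg⟩
      exact isConj_iff.2 ⟨c, by rw [hy.eq, mul_inv_cancel_right]⟩
    · -- cyclically reduced
      refine absurd hfin (no_small_order φ hd _ h0 chain ?_)
      intro p hp q hq hmem
      simp only [List.cons_append, List.head?_cons, Option.mem_some_iff] at hp
      rw [List.getLast?_concat, Option.mem_some_iff] at hq
      subst hp; subst hq
      rcases units_cases lst.1 f.1 with h | h
      · exact h.symm ▸ rfl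
      · exact absurd ⟨hmem, h⟩ hred

end HNNTorsionFreeAux

/-- An HNN extension of a torsion-free group is torsion-free. -/
theorem stmt3 (G : Type*) [Group G] (A B : Subgroup G) (φ : A ≃* B)
    (hG : ∀ g : G, g ≠ 1 → ¬IsOfFinOrder g) :
    ∀ g : HNNExtension G A B φ, g ≠ 1 → ¬IsOfFinOrder g := by
  intro x hx1 hxfin
  rcases HNNExtension.NormalWord.TransversalPair.nonempty G A B with ⟨d⟩
  set w : HNNExtension.NormalWord d := HNNExtension.NormalWord.equiv φ d x with hwdef
  have hxw : x = w.prod φ := ((HNNExtension.NormalWord.equiv φ d).symm_apply_apply x).symm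
  obtain ⟨g, hg⟩ := HNNTorsionFreeAux.key φ w.toList.length w.toReducedWord le_rfl
    (by rw [← hxw]; exact hxfin)
  obtain ⟨c, hc⟩ := isConj_iff.1 hg
  have hxw' : x = w.toReducedWord.prod φ := hxw
  have hgfin : IsOfFinOrder (HNNExtension.of (φ := φ) g) := by
    obtain ⟨n, hn, hxn⟩ := isOfFinOrder_iff_pow_eq_one.1 hxfin
    refine isOfFinOrder_iff_pow_eq_one.2 ⟨n, hn, ?_⟩
    rw [← hc, conj_pow, ← hxw', hxn, mul_one, mul_inv_cancel]
  have hg1 : g = 1 := by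
    by_contra hgne
    obtain ⟨n, hn, hgn⟩ := isOfFinOrder_iff_pow_eq_one.1 hgfin
    have : HNNExtension.of (φ := φ) (g ^ n) = HNNExtension.of (φ := φ) 1 := by
      rw [map_pow, hgn, map_one]
    exact hG g hgne (isOfFinOrder_iff_pow_eq_one.2
      ⟨n, hn, HNNExtension.of_injective (φ := φ) this⟩)
  rw [hg1, map_one] at hc
  apply hx1
  rw [← hxw'] at hc
  calc x = c⁻¹ * (c * x * c⁻¹) * c := by group
    _ = 1 := by rw [hc]; group
end

section
/- For every torsion-free group G there exist a torsion-free group H and an injective group homomorphism ι : G → H such that for any two non-identity elements α, β ∈ G, the images ι(α) and ι(β) are conjugate in H. Moreover, if G is countable then H can be chosen countable. -/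
/-- A monoid is torsion-free if no element other than `1` has finite order
(the definition of `Monoid.IsTorsionFree` in the older Mathlib, since removed). -/
def Monoid.IsTorsionFree (G : Type*) [Monoid G] : Prop :=
  ∀ g : G, g ≠ 1 → ¬IsOfFinOrder g

open List

section ListLemmas

variable {α : Type*} {r : α → α → Prop}

theorem chain'_concat_mod {l : List α} {a b : α} (hab : ∀ c, r c a → r c b)
    (h : List.Chain' r (l ++ [a])) : List.Chain' r (l ++ [b]) := by
  simp only [List.Chain'] at h ⊢
  rw [List.isChain_append] at h ⊢
  refine ⟨h.1, List.isChain_singleton _, fun x hx y hy => ?_⟩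
  simp only [List.head?_cons, Option.mem_some_iff] at hy
  subst hy
  exact hab x (h.2.2 x hx a rfl)

theorem chain'_flatten_replicate {l : List α} (hl : List.Chain' r (l ++ l)) (n : ℕ) :
    List.Chain' r (List.flatten (List.replicate n l)) := by
  obtain ⟨h1, -, hj⟩ := List.isChain_append.1 hl
  induction n with
  | zero => simp [List.Chain']
  | succ n ih =>
    rw [List.replicate_succ, List.flatten_cons]; simp only [List.Chain'] at ih ⊢; rw [List.isChain_append]
    refine ⟨h1, ih, fun x hx y hy => ?_⟩
    apply hj x hx
    rcases n with - | m
    · simp at hy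
    · rw [List.replicate_succ, List.flatten_cons] at hy
      cases l with
      | nil => simp at hx
      | cons a l => simpa using hy

theorem flatten_replicate_ne_nil {l : List α} (hl : l ≠ []) {n : ℕ} (hn : 0 < n) :
    List.flatten (List.replicate n l) ≠ [] := by
  rcases n with - | m
  · omega
  · rw [List.replicate_succ, List.flatten_cons]
    simp [hl]

theorem mem_of_mem_flatten_replicate {l : List α} {n : ℕ} {p : α}
    (hp : p ∈ List.flatten (List.replicate n l)) : p ∈ l := by
  induction n with
  | zero => simp at hp
  | succ n ihn =>
    rw [List.replicate_succ, List.flatten_cons, List.mem_append] at hp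
    rcases hp with hp | hp
    · exact hp
    · exact ihn hp

end ListLemmas

theorem conj_pow_left {G : Type*} [Group G] (c x : G) (n : ℕ) :
    (c * x * c⁻¹) ^ n = c * x ^ n * c⁻¹ := by
  induction n with
  | zero => simp
  | succ n ih => rw [pow_succ, pow_succ, ih]; group

theorem eq_one_of_conj_eq_one {G : Type*} [Group G] {c x : G} (h : c * x * c⁻¹ = 1) :
    x = 1 := by
  have : x = c⁻¹ * (c * x * c⁻¹) * c := by group
  rw [this, h]; group

theorem regroup5 {H : Type*} [Group H] (A B C D M : H) :
    (A * B) * ((C * D) * (M * (A * B))) * (A * B)⁻¹ = (A * B * C) * (D * M) := by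
  group

namespace HNNTorsion

open HNNExtension HNNExtension.NormalWord

variable {G : Type*} [Group G] {A B : Subgroup G}

/-- Product of a list of `t^u * g` letters. -/
def lp (φ : A ≃* B) (l : List (ℤˣ × G)) : HNNExtension G A B φ :=
  (l.map (fun x => t ^ (x.1 : ℤ) * of x.2)).prod

/-- The chain relation of reduced words -/
def R (A B : Subgroup G) : (ℤˣ × G) → (ℤˣ × G) → Prop :=
  fun a b => a.2 ∈ toSubgroup A B a.1 → a.1 = b.1

variable (φ : A ≃* B)

theorem lp_nil : lp φ [] = 1 := rfl

theorem lp_append (l₁ l₂ : List (ℤˣ × G)) : lp φ (l₁ ++ l₂) = lp φ l₁ * lp φ l₂ := by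
  simp [lp]

theorem lp_cons (p : ℤˣ × G) (l : List (ℤˣ × G)) :
    lp φ (p :: l) = t ^ (p.1 : ℤ) * of p.2 * lp φ l := by
  simp [lp]

theorem lp_singleton (p : ℤˣ × G) : lp φ [p] = t ^ (p.1 : ℤ) * of p.2 := by
  simp [lp]

theorem prod_eq_lp (w : ReducedWord G A B) : w.prod φ = of w.head * lp φ w.toList := rfl

theorem lp_flatten_replicate (l : List (ℤˣ × G)) (n : ℕ) :
    lp φ (List.flatten (List.replicate n l)) = (lp φ l) ^ n := by
  induction n with
  | zero => simp [lp]
  | succ n ih => rw [List.replicate_succ, List.flatten_cons, lp_append, ih, pow_succ']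

theorem eq_nil_of_lp_eq_one {l : List (ℤˣ × G)} (hchain : l.Chain' (R A B))
    (h : lp φ l = 1) : l = [] := by
  have h2 : ReducedWord.prod φ ⟨1, l, hchain⟩ ∈ of.range := by
    rw [prod_eq_lp]
    exact ⟨1, by simp [h]⟩
  exact HNNExtension.ReducedWord.toList_eq_nil_of_mem_of_range φ _ h2

theorem t_pow_conj (u : ℤˣ) {g : G} (hg : g ∈ toSubgroup A B u) :
    ∃ a : G, (t ^ (u : ℤ) * of g * t ^ (-(u : ℤ)) : HNNExtension G A B φ) = of a := by
  rcases Int.units_eq_one_or u with rfl | rfl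
  · refine ⟨φ ⟨g, by simpa using hg⟩, ?_⟩
    rw [equiv_eq_conj]
    norm_num
  · refine ⟨φ.symm ⟨g, by simpa using hg⟩, ?_⟩
    rw [equiv_symm_eq_conj]
    norm_num

theorem main (hG : Monoid.IsTorsionFree G) {n : ℕ} (hn : 0 < n) :
    ∀ (k : ℕ) (h : G) (l : List (ℤˣ × G)), l.Chain' (R A B) → l.length ≤ k →
      (of h * lp φ l) ^ n = 1 → of h * lp φ l = 1 := by
  intro k
  induction k using Nat.strong_induction_on with
  | _ k ih =>
  intro h l hchain hlen hpow
  rcases eq_or_ne l [] with rfl | hlnil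
  · rw [lp_nil, mul_one] at hpow ⊢
    rw [← map_pow] at hpow
    have h1 : h ^ n = 1 := of_injective (φ := φ) (by rw [hpow, map_one])
    have : h = 1 := by
      by_contra hne
      exact hG h hne (isOfFinOrder_iff_pow_eq_one.2 ⟨n, hn, h1⟩)
    rw [this, map_one]
  · -- absorb head into last letter
    obtain ⟨q, hq⟩ : ∃ q : ℤˣ × G, l.getLast hlnil = q := ⟨_, rfl⟩
    set q' : ℤˣ × G := (q.1, q.2 * h) with hq'def
    set l' : List (ℤˣ × G) := l.dropLast ++ [q'] with hl'
    have hldec : l = l.dropLast ++ [q] := by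
      rw [← hq]; exact (List.dropLast_append_getLast hlnil).symm
    have hchainl : List.Chain' (R A B) (l.dropLast ++ [q]) := by
      rw [← hldec]; exact hchain
    have hchain' : List.Chain' (R A B) l' :=
      chain'_concat_mod (a := q) (fun c hc hm => hc hm) hchainl
    have hlen' : l'.length = l.length := by
      have : 1 ≤ l.length := List.length_pos_iff.2 hlnil
      simp only [hl', List.length_append, List.length_dropLast, List.length_singleton]
      omega
    have hl'nil : l' ≠ [] := by simp [hl']
    have hy : (of h)⁻¹ * (of h * lp φ l) * of h = lp φ l' := by
      have h2 : lp φ l * of h = lp φ l' := by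
        conv_lhs => rw [hldec]
        rw [lp_append, lp_singleton, hl', lp_append, lp_singleton, hq'def, map_mul]
        simp [mul_assoc]
      rw [← h2]; group
    have hypow : (lp φ l') ^ n = 1 := by
      rw [← hy]
      have : (of h)⁻¹ * (of h * lp φ l) * of h
          = (of h)⁻¹ * (of h * lp φ l) * ((of h)⁻¹)⁻¹ := by group
      rw [this, conj_pow_left, hpow]; group
    suffices hy1 : lp φ l' = 1 by
      have h3 : (of h)⁻¹ * (of h * lp φ l) * ((of h)⁻¹)⁻¹ = 1 := by
        rw [← hy1, ← hy]; group
      exact eq_one_of_conj_eq_one h3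
    have hlast? : l'.getLast? = some q' := by rw [hl']; exact List.getLast?_concat
    by_cases hcyc : ∀ y ∈ l'.head?, R A B q' y
    · exfalso
      have hcc : List.Chain' (R A B) (l' ++ l') := by
        simp only [List.Chain']; rw [List.isChain_append]
        refine ⟨hchain', hchain', fun x hx y hy => ?_⟩
        rw [hlast?, Option.mem_some_iff] at hx
        subst hx
        exact hcyc y hy
      have h0 : lp φ (List.flatten (List.replicate n l')) = 1 := by
        rw [lp_flatten_replicate, hypow]
      exact flatten_replicate_ne_nil hl'nil hn
        (eq_nil_of_lp_eq_one φ (chain'_flatten_replicate hcc n) h0)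
    · push_neg at hcyc
      obtain ⟨p, hphead, hnR⟩ := hcyc
      simp only [R, not_forall] at hnR
      obtain ⟨hq'mem, hune⟩ := hnR
      -- l.dropLast cannot be empty
      rcases hdl : l.dropLast with - | ⟨a, m⟩
      · exfalso
        rw [hl', hdl] at hphead
        simp only [List.nil_append, List.head?_cons, Option.mem_some_iff] at hphead
        exact hune (show q'.1 = p.1 from congrArg Prod.fst hphead)
      · have hdecomp : l' = p :: (m ++ [q']) := by
          rw [hl', hdl] at hphead ⊢
          simp only [List.cons_append, List.head?_cons, Option.mem_some_iff] at hphead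
          rw [List.cons_append, hphead]
        have hchainm : List.Chain' (R A B) m := by
          rw [hdecomp] at hchain'
          exact (hchain'.tail).prefix ⟨[q'], rfl⟩
        have hlenm : m.length + 2 = l.length := by
          rw [← hlen', hdecomp]
          simp
        have hk2 : 2 ≤ k := by omega
        -- the conjugating element
        have hune' : q'.1 ≠ p.1 := hune
        have hq'u : (p.1 : ℤ) = -(q'.1 : ℤ) := by
          rcases Int.units_eq_one_or p.1 with h1 | h1 <;>
            rcases Int.units_eq_one_or q'.1 with h2 | h2 <;>
              first
                | exact absurd (h2.trans h1.symm) hune'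
                | (rw [h1, h2]; norm_num)
        obtain ⟨b, hb⟩ := t_pow_conj φ q'.1 hq'mem
        have hz : (t ^ (q'.1 : ℤ) * of q'.2) * lp φ l' * (t ^ (q'.1 : ℤ) * of q'.2)⁻¹
            = of (b * p.2) * lp φ m := by
          rw [hdecomp, lp_cons, lp_append, lp_singleton, hq'u, regroup5, hb, map_mul,
            mul_assoc]
        have hzpow : (of (b * p.2) * lp φ m) ^ n = 1 := by
          rw [← hz, conj_pow_left, hypow]
          group
        have hz1 : of (b * p.2) * lp φ m = 1 :=
          ih (k - 1) (by omega) (b * p.2) m hchainm (by omega) hzpow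
        have h4 : (t ^ (q'.1 : ℤ) * of q'.2) * lp φ l' * (t ^ (q'.1 : ℤ) * of q'.2)⁻¹ = 1 := by
          rw [hz, hz1]
        exact eq_one_of_conj_eq_one h4



theorem hnn_isTorsionFree (hG : Monoid.IsTorsionFree G) :
    Monoid.IsTorsionFree (HNNExtension G A B φ) := by
  intro x hx hfin
  obtain ⟨n, hn, hxn⟩ := isOfFinOrder_iff_pow_eq_one.1 hfin
  apply hx
  obtain ⟨d⟩ := TransversalPair.nonempty G A B
  set w : NormalWord d := (NormalWord.equiv φ d) x with hw
  have hxw : x = of w.head * lp φ w.toList := by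
    conv_lhs => rw [← (NormalWord.equiv φ d).symm_apply_apply x]
    rfl
  rw [hxw] at hxn ⊢
  exact main φ hG hn _ w.head w.toList w.chain le_rfl hxn

end HNNTorsion


namespace PushTorsion

open Monoid PushoutI CoprodI Function List

variable {ι : Type*} {K : ι → Type*} [∀ i, Group (K i)] {N : Type*} [Group N]
  (φ : ∀ i, N →* K i)

/-- Product of a list of letters in the pushout. -/
def lp (l : List (Σ i, K i)) : PushoutI φ :=
  (l.map (fun p => of p.1 p.2)).prod

theorem lp_nil : lp φ [] = 1 := rfl

theorem lp_append (l₁ l₂ : List (Σ i, K i)) : lp φ (l₁ ++ l₂) = lp φ l₁ * lp φ l₂ := by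
  simp [lp]

theorem lp_cons (p : Σ i, K i) (l : List (Σ i, K i)) :
    lp φ (p :: l) = of p.1 p.2 * lp φ l := by
  simp [lp]

theorem lp_singleton (p : Σ i, K i) : lp φ [p] = of p.1 p.2 := by
  simp [lp]

theorem lp_flatten_replicate (l : List (Σ i, K i)) (n : ℕ) :
    lp φ (List.flatten (List.replicate n l)) = (lp φ l) ^ n := by
  induction n with
  | zero => simp [lp]
  | succ n ih => rw [List.replicate_succ, List.flatten_cons, lp_append, ih, pow_succ']

theorem eq_nil_of_lp_eq_one (hφ : ∀ i, Injective (φ i)) {l : List (Σ i, K i)}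
    (hchain : l.Chain' (fun a b => a.1 ≠ b.1)) (hred : ∀ p ∈ l, p.2 ∉ (φ p.1).range)
    (h : lp φ l = 1) : l = [] := by
  have hne : ∀ p ∈ l, Sigma.snd p ≠ 1 := by
    intro p hp hp1
    exact hred p hp ⟨1, by rw [map_one, hp1]⟩
  set w : Word K := ⟨l, hne, hchain⟩ with hw
  have hprod : ofCoprodI (φ := φ) w.prod = lp φ l := by
    rw [Word.prod, map_list_prod, List.map_map, lp]
    congr 1
    all_goals
      apply List.map_congr_left
      intro p _
      simp [ofCoprodI_of]
  have hempty : w = Word.empty :=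
    Reduced.eq_empty_of_mem_range hφ (fun g hg => hred g hg) (by rw [hprod, h]; exact ⟨1, map_one _⟩)
  have := congrArg Word.toList hempty
  simpa [hw, Word.empty] using this

theorem push_main (hφ : ∀ i, Injective (φ i)) (hN : Monoid.IsTorsionFree N)
    (hK : ∀ i, Monoid.IsTorsionFree (K i)) {n : ℕ} (hn : 0 < n) :
    ∀ (k : ℕ) (h : N) (l : List (Σ i, K i)), l.Chain' (fun a b => a.1 ≠ b.1) →
      (∀ p ∈ l, p.2 ∉ (φ p.1).range) → l.length ≤ k →
      (base φ h * lp φ l) ^ n = 1 → base φ h * lp φ l = 1 := by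
  intro k
  induction k using Nat.strong_induction_on with
  | _ k ih =>
  intro h l hchain hred hlen hpow
  match l, hchain, hred, hlen with
  | [], _, _, _ =>
    rw [lp_nil, mul_one] at hpow ⊢
    rw [← map_pow] at hpow
    have h1 : h ^ n = 1 := base_injective hφ (by rw [hpow, map_one])
    have : h = 1 := by
      by_contra hne
      exact hN h hne (isOfFinOrder_iff_pow_eq_one.2 ⟨n, hn, h1⟩)
    rw [this, map_one]
  | [⟨i, g⟩], _, _, _ =>
    rw [lp_singleton] at hpow ⊢
    show base φ h * of i g = 1
    rw [← of_apply_eq_base φ i h, ← map_mul] at hpow ⊢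
    rw [← map_pow] at hpow
    have h1 : (φ i h * g) ^ n = 1 := of_injective hφ i (by rw [hpow, map_one])
    have : φ i h * g = 1 := by
      by_contra hne
      exact hK i _ hne (isOfFinOrder_iff_pow_eq_one.2 ⟨n, hn, h1⟩)
    rw [this, map_one]
  | p₀ :: p₁ :: l₀, hchain, hred, hlen =>
    set l : List (Σ i, K i) := p₀ :: p₁ :: l₀ with hldef
    have hlnil : l ≠ [] := by simp [hldef]
    have hllen : 2 ≤ l.length := by simp [hldef]
    obtain ⟨q, hq⟩ : ∃ q : Σ i, K i, l.getLast hlnil = q := ⟨_, rfl⟩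
    set q' : Σ i, K i := ⟨q.1, q.2 * φ q.1 h⟩ with hq'def
    set l' : List (Σ i, K i) := l.dropLast ++ [q'] with hl'
    have hldec : l = l.dropLast ++ [q] := by
      rw [← hq]; exact (List.dropLast_append_getLast hlnil).symm
    have hchainl : List.Chain' (fun a b : Σ i, K i => a.1 ≠ b.1) (l.dropLast ++ [q]) := by
      rw [← hldec]; exact hchain
    have hchain' : List.Chain' (fun a b : Σ i, K i => a.1 ≠ b.1) l' :=
      chain'_concat_mod (a := q) (fun c hc => hc) hchainl
    have hmulrange : ∀ (j : ι) (g : K j), g ∉ (φ j).range → ∀ w : N, g * φ j w ∉ (φ j).range := by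
      intro j g hg w ⟨v, hv⟩
      exact hg ⟨v * w⁻¹, by rw [map_mul, map_inv, hv]; group⟩
    have hred' : ∀ p ∈ l', p.2 ∉ (φ p.1).range := by
      intro p hp
      rw [hl'] at hp
      rcases List.mem_append.1 hp with hp | hp
      · exact hred p (List.dropLast_subset _ hp)
      · simp only [List.mem_singleton] at hp
        subst hp
        exact hmulrange q.1 q.2 (hred q (hldec ▸ List.mem_append_right _ (List.mem_singleton_self _))) h
    have hlen' : l'.length = l.length := by
      have : 1 ≤ l.length := List.length_pos_iff.2 hlnil
      simp only [hl', List.length_append, List.length_dropLast, List.length_singleton]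
      omega
    have hl'nil : l' ≠ [] := by simp [hl']
    have hy : (base φ h)⁻¹ * (base φ h * lp φ l) * base φ h = lp φ l' := by
      have h2 : lp φ l * base φ h = lp φ l' := by
        conv_lhs => rw [hldec]
        simp [hl', lp_append, lp_singleton, hq'def, map_mul, of_apply_eq_base, mul_assoc]
      rw [← h2]; group
    have hypow : (lp φ l') ^ n = 1 := by
      rw [← hy]
      have : (base φ h)⁻¹ * (base φ h * lp φ l) * base φ h
          = (base φ h)⁻¹ * (base φ h * lp φ l) * ((base φ h)⁻¹)⁻¹ := by group
      rw [this, conj_pow_left, hpow]; group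
    suffices hy1 : lp φ l' = 1 by
      have h3 : (base φ h)⁻¹ * (base φ h * lp φ l) * ((base φ h)⁻¹)⁻¹ = 1 := by
        rw [← hy1, ← hy]; group
      exact eq_one_of_conj_eq_one h3
    have hlast? : l'.getLast? = some q' := by rw [hl']; exact List.getLast?_concat
    by_cases hcyc : ∀ y ∈ l'.head?, q'.1 ≠ y.1
    · exfalso
      have hcc : List.Chain' (fun a b : Σ i, K i => a.1 ≠ b.1) (l' ++ l') := by
        simp only [List.Chain']; rw [List.isChain_append]
        refine ⟨hchain', hchain', fun x hx y hy => ?_⟩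
        rw [hlast?, Option.mem_some_iff] at hx
        subst hx
        exact hcyc y hy
      have h0 : lp φ (List.flatten (List.replicate n l')) = 1 := by
        rw [lp_flatten_replicate, hypow]
      refine flatten_replicate_ne_nil hl'nil hn
        (eq_nil_of_lp_eq_one φ hφ (chain'_flatten_replicate hcc n) ?_ h0)
      intro p hp
      exact hred' p (mem_of_mem_flatten_replicate hp)
    · push_neg at hcyc
      obtain ⟨p, hphead, hpq⟩ := hcyc
      -- l.dropLast cannot be empty since l has length ≥ 2
      rcases hdl : l.dropLast with - | ⟨a, m⟩
      · exfalso
        have := congrArg List.length hdl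
        rw [List.length_dropLast] at this
        simp [hldef] at this
      · have hdecomp : l' = p :: (m ++ [q']) := by
          rw [hl', hdl] at hphead ⊢
          simp only [List.cons_append, List.head?_cons, Option.mem_some_iff] at hphead
          rw [List.cons_append, hphead]
        have hchaincons := hdecomp ▸ hchain'
        have hjun : ∀ y ∈ (m ++ [q']).head?, p.1 ≠ y.1 := (List.isChain_cons.1 hchaincons).1
        have hchainm : List.Chain' (fun a b : Σ i, K i => a.1 ≠ b.1) m :=
          ((List.isChain_cons.1 hchaincons).2).prefix ⟨[q'], rfl⟩
        have hredm : ∀ p ∈ m, p.2 ∉ (φ p.1).range := by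
          intro x hx
          exact hred' x (by rw [hdecomp]; exact List.mem_cons_of_mem _ (List.mem_append_left _ hx))
        have hlenm : m.length + 2 = l.length := by
          rw [← hlen', hdecomp]; simp
        have hk2 : 2 ≤ k := le_trans hllen hlen
        -- merge the last letter with the first
        obtain ⟨gq, hgq⟩ : ∃ gq : K p.1, q' = ⟨p.1, gq⟩ := by
          rcases q' with ⟨j, g⟩
          cases hpq
          exact ⟨g, rfl⟩
        have hz : of p.1 gq * lp φ l' * (of p.1 gq)⁻¹ = of p.1 (gq * p.2) * lp φ m := by
          rw [hdecomp, hgq, lp_cons, lp_append, lp_singleton]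
          dsimp only
          have hre : ∀ A D M : PushoutI φ, A * (D * (M * A)) * A⁻¹ = A * D * M := by
            intro A D M; group
          rw [hre, ← map_mul]
        have hzpow : (of p.1 (gq * p.2) * lp φ m) ^ n = 1 := by
          rw [← hz, conj_pow_left, hypow]; group
        have hz1 : of p.1 (gq * p.2) * lp φ m = 1 := by
          by_cases hrange : gq * p.2 ∈ (φ p.1).range
          · obtain ⟨h', hh'⟩ := hrange
            rw [← hh', of_apply_eq_base] at hzpow ⊢
            exact ih (k - 1) (by omega) h' m hchainm hredm (by omega) hzpow
          · have heq : of p.1 (gq * p.2) * lp φ m = base φ 1 * lp φ (⟨p.1, gq * p.2⟩ :: m) := by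
              rw [map_one, one_mul, lp_cons]
            rw [heq] at hzpow ⊢
            refine ih (k - 1) (by omega) 1 _ ?_ ?_ (by simp; omega) hzpow
            · refine List.isChain_cons.2 ⟨?_, hchainm⟩
              intro y hy
              apply hjun
              cases m with
              | nil => simp at hy
              | cons b mb => simpa using hy
            · intro x hx
              rcases List.mem_cons.1 hx with rfl | hx
              · exact hrange
              · exact hredm x hx
        have h4 : of p.1 gq * lp φ l' * (of p.1 gq)⁻¹ = 1 := by rw [hz, hz1]
        exact eq_one_of_conj_eq_one h4


theorem pushout_isTorsionFree (hφ : ∀ i, Injective (φ i)) (hN : Monoid.IsTorsionFree N)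
    (hK : ∀ i, Monoid.IsTorsionFree (K i)) : Monoid.IsTorsionFree (PushoutI φ) := by
  intro x hx hfin
  obtain ⟨n, hn, hxn⟩ := isOfFinOrder_iff_pow_eq_one.1 hfin
  apply hx
  classical
  obtain ⟨d⟩ := (NormalWord.transversal_nonempty φ hφ)
  set w : NormalWord d := (NormalWord.equiv (φ := φ) (d := d)) x with hw
  have hprod : ofCoprodI (φ := φ) (w.toWord.prod) = lp φ w.toList := by
    rw [Word.prod, map_list_prod, List.map_map, lp]
    congr 1
    all_goals
      apply List.map_congr_left
      intro p _
      simp [ofCoprodI_of]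
  have hxw : x = base φ w.head * lp φ w.toList := by
    conv_lhs => rw [← (NormalWord.equiv (φ := φ) (d := d)).symm_apply_apply x]
    show NormalWord.prod w = _
    rw [NormalWord.prod, hprod]
  have hred : ∀ p ∈ w.toList, p.2 ∉ (φ p.1).range := by
    rintro ⟨i, g⟩ hp ⟨v, hv⟩
    have hset : g ∈ d.set i := w.normalized i g hp
    have hone : g ≠ 1 := w.ne_one _ hp
    -- g is both in the range and in the transversal, so g = 1
    have h1 := (d.compl i).existsUnique g
    obtain ⟨u, hu, huniq⟩ := h1
    have e1 : ((⟨⟨g, ⟨v, hv⟩⟩, ⟨1, d.one_mem i⟩⟩ : ((φ i).range : Set (K i)) × (d.set i)))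
        = u := huniq _ (by simp)
    have e2 : ((⟨⟨1, one_mem _⟩, ⟨g, hset⟩⟩ : ((φ i).range : Set (K i)) × (d.set i)))
        = u := huniq _ (by simp)
    have e3 := e1.trans e2.symm
    apply hone
    have := congrArg (fun p => (p.1 : K i)) e3
    simpa using this
  rw [hxw] at hxn ⊢
  exact push_main φ hφ hN hK hn _ w.head w.toList w.chain_ne hred le_rfl hxn

end PushTorsion


section Countability

open Monoid

theorem countable_coprod {M N : Type*} [Monoid M] [Monoid N] [Countable M] [Countable N] :
    Countable (Coprod M N) := by
  have h1 : Countable (FreeMonoid (M ⊕ N)) := inferInstanceAs (Countable (List (M ⊕ N)))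
  exact (Con.mk'_surjective (c := Monoid.coprodCon M N)).countable

theorem countable_coprodI {ι : Type*} {M : ι → Type*} [∀ i, Monoid (M i)] [Countable ι]
    [∀ i, Countable (M i)] : Countable (CoprodI M) := by
  have h1 : Countable (FreeMonoid (Σ i, M i)) := inferInstanceAs (Countable (List (Σ i, M i)))
  exact (Con.mk'_surjective (c := conGen (Monoid.CoprodI.Rel M))).countable

theorem countable_hnn {G : Type*} [Group G] [Countable G] {A B : Subgroup G} (φ : A ≃* B) :
    Countable (HNNExtension G A B φ) := by
  have h1 : Countable (Coprod G (Multiplicative ℤ)) := countable_coprod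
  exact (Con.mk'_surjective (c := HNNExtension.con G A B φ)).countable

theorem countable_pushout {ι : Type*} {K : ι → Type*} [∀ i, Group (K i)] {N : Type*} [Group N]
    (φ : ∀ i, N →* K i) [Countable ι] [∀ i, Countable (K i)] [Countable N] :
    Countable (PushoutI φ) := by
  have h1 : Countable (CoprodI K) := countable_coprodI
  have h2 : Countable (Coprod (CoprodI K) N) := countable_coprod
  exact (Con.mk'_surjective (c := PushoutI.con φ)).countable

end Countability

section ZPowers

open Subgroup

/-- The isomorphism `Multiplicative ℤ ≃* zpowers a` for an element of infinite order -/
noncomputable def zintToZPowers {G : Type*} [Group G] {a : G} (ha : ¬IsOfFinOrder a) :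
    Multiplicative ℤ ≃* Subgroup.zpowers a := by
  refine MulEquiv.ofBijective
    ((zpowersHom G a).codRestrict (Subgroup.zpowers a)
      (fun n => mem_zpowers_iff.2 ⟨n.toAdd, rfl⟩)) ⟨?_, ?_⟩
  · intro x y hxy
    have : a ^ x.toAdd = a ^ y.toAdd := congrArg Subtype.val hxy
    exact (injective_zpow_iff_not_isOfFinOrder.2 ha) this
  · rintro ⟨g, hg⟩
    obtain ⟨k, hk⟩ := mem_zpowers_iff.1 hg
    exact ⟨Multiplicative.ofAdd k, Subtype.ext hk⟩

theorem zintToZPowers_one {G : Type*} [Group G] {a : G} (ha : ¬IsOfFinOrder a) :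
    zintToZPowers ha (Multiplicative.ofAdd 1) = ⟨a, mem_zpowers a⟩ := by
  apply Subtype.ext
  show a ^ (1 : ℤ) = a
  simp

/-- Conjugating isomorphism between infinite cyclic subgroups, sending generator to generator. -/
theorem zpowers_mulEquiv {G : Type*} [Group G] {a b : G} (ha : ¬IsOfFinOrder a)
    (hb : ¬IsOfFinOrder b) :
    ∃ e : Subgroup.zpowers a ≃* Subgroup.zpowers b,
      e ⟨a, mem_zpowers a⟩ = ⟨b, mem_zpowers b⟩ := by
  refine ⟨(zintToZPowers ha).symm.trans (zintToZPowers hb), ?_⟩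
  rw [MulEquiv.trans_apply, ← zintToZPowers_one ha, MulEquiv.symm_apply_apply,
    zintToZPowers_one hb]

end ZPowers

section Main

open Monoid Subgroup

/-- Every torsion-free group embeds in a torsion-free group in which the images of
any two non-identity elements of the original group are conjugate; if the original
group is countable, the bigger group can be chosen countable. -/
theorem stmt4 (G : Type u) [Group G] (hG : Monoid.IsTorsionFree G) :
    ∃ (H : Type u) (_ : Group H) (ι : G →* H),
      Function.Injective ι ∧
      Monoid.IsTorsionFree H ∧
      (∀ α β : G, α ≠ 1 → β ≠ 1 → ∃ t : H, t⁻¹ * ι α * t = ι β) ∧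
      (Countable G → Countable H) := by
  by_cases htriv : ∀ g : G, g = 1
  · exact ⟨G, ‹_›, MonoidHom.id G, Function.injective_id, hG,
      fun α β hα hβ => absurd (htriv α) hα, fun h => h⟩
  · push_neg at htriv
    obtain ⟨γ, hγ⟩ := htriv
    have hγfin : ¬IsOfFinOrder γ := hG γ hγ
    -- index type: nontrivial elements of G
    have hsel : ∀ α : {g : G // g ≠ 1}, ∃ e : zpowers (α : G) ≃* zpowers γ,
        e ⟨(α : G), mem_zpowers _⟩ = ⟨γ, mem_zpowers γ⟩ :=
      fun α => zpowers_mulEquiv (hG α.1 α.2) hγfin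
    choose e he using hsel
    let K : {g : G // g ≠ 1} → Type u := fun α => HNNExtension G (zpowers (α : G)) (zpowers γ) (e α)
    let φ : ∀ α, G →* K α := fun α => HNNExtension.of
    have hφ : ∀ α, Function.Injective (φ α) := fun α => HNNExtension.of_injective (e α)
    refine ⟨Monoid.PushoutI φ, inferInstance, Monoid.PushoutI.base φ,
      Monoid.PushoutI.base_injective hφ,
      PushTorsion.pushout_isTorsionFree φ hφ hG
        (fun α => HNNTorsion.hnn_isTorsionFree (e α) hG), ?_, ?_⟩
    · -- conjugacy
      have key : ∀ α : {g : G // g ≠ 1}, ∃ s : Monoid.PushoutI φ,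
          s * Monoid.PushoutI.base φ (α : G) * s⁻¹ = Monoid.PushoutI.base φ γ := by
        intro α
        refine ⟨Monoid.PushoutI.of (φ := φ) α (HNNExtension.t), ?_⟩
        have h1 : (HNNExtension.of γ : K α)
            = HNNExtension.t * HNNExtension.of (α : G) * HNNExtension.t⁻¹ := by
          have := HNNExtension.equiv_eq_conj (φ := e α) ⟨(α : G), mem_zpowers _⟩
          rw [he α] at this
          exact this
        have h2 : Monoid.PushoutI.base φ (α : G)
            = Monoid.PushoutI.of (φ := φ) α (HNNExtension.of (α : G)) :=
          (Monoid.PushoutI.of_apply_eq_base φ α (α : G)).symm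
        have h3 : Monoid.PushoutI.base φ γ
            = Monoid.PushoutI.of (φ := φ) α (HNNExtension.of γ) :=
          (Monoid.PushoutI.of_apply_eq_base φ α γ).symm
        rw [h2, h3, h1, ← map_inv, ← map_mul, ← map_mul]
      intro α β hα hβ
      obtain ⟨sα, hsα⟩ := key ⟨α, hα⟩
      obtain ⟨sβ, hsβ⟩ := key ⟨β, hβ⟩
      refine ⟨sα⁻¹ * sβ, ?_⟩
      have hβ' : Monoid.PushoutI.base φ β = sβ⁻¹ * Monoid.PushoutI.base φ γ * sβ := by
        rw [← hsβ]; group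
      rw [mul_inv_rev, inv_inv, hβ', ← hsα]
      group
    · -- countability
      intro hc
      have hι : Countable {g : G // g ≠ 1} := Subtype.countable
      have hK : ∀ α, Countable (K α) := fun α => countable_hnn (e α)
      exact countable_pushout φ

end Main
end

section
/- There exists a group that is simultaneously countable, infinite, torsion-free, and simple. -/
open Subgroup List Function
open HNNExtension (toSubgroup toSubgroupEquiv t t_mul_of inv_t_mul_of)
open HNNExtension.NormalWord (ReducedWord)

variable {G : Type} [Group G] {A B : Subgroup G} {φ : A ≃* B}

namespace TFHNN

abbrev R (A B : Subgroup G) : (ℤˣ × G) → (ℤˣ × G) → Prop :=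
  fun a b => a.2 ∈ toSubgroup A B a.1 → a.1 = b.1

def P (φ : A ≃* B) (l : List (ℤˣ × G)) : HNNExtension G A B φ :=
  (l.map fun x => t ^ (x.1 : ℤ) * HNNExtension.of x.2).prod

theorem P_append (l₁ l₂ : List (ℤˣ × G)) :
    P φ (l₁ ++ l₂) = P φ l₁ * P φ l₂ := by
  simp [P]

theorem prod_eq_P (w : ReducedWord G A B) :
    w.prod φ = HNNExtension.of w.head * P φ w.toList := rfl

theorem t_zpow_mul_of {u : ℤˣ} (a : G) (ha : a ∈ toSubgroup A B u) :
    (t ^ (u : ℤ) * HNNExtension.of a : HNNExtension G A B φ) =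
      HNNExtension.of (toSubgroupEquiv φ u ⟨a, ha⟩ : G) * t ^ (u : ℤ) := by
  rcases Int.units_eq_one_or u with rfl | rfl
  · simp only [Units.val_one, zpow_one]
    exact t_mul_of (φ := φ) ⟨a, ha⟩
  · simp only [Units.val_neg, Units.val_one, zpow_neg, zpow_one]
    exact inv_t_mul_of (φ := φ) ⟨a, ha⟩

theorem pow_ne_one_of_cyclicallyReduced (L : List (ℤˣ × G)) (hL : L ≠ [])
    (hc : L.Chain' (R A B))
    (hcyc : ∀ p ∈ L.getLast?, ∀ q ∈ L.head?, R A B p q)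
    {n : ℕ} (hn : n ≠ 0) : (P φ L) ^ n ≠ 1 := by
  have key : ∀ m : ℕ, Chain' (R A B) (List.flatten (List.replicate m L)) ∧
      ((List.flatten (List.replicate m L)) = [] ∨
        (List.flatten (List.replicate m L)).head? = L.head?) ∧
      P φ (List.flatten (List.replicate m L)) = (P φ L) ^ m := by
    intro m
    induction m with
    | zero => simp [P, List.Chain']
    | succ m ih =>
      rw [List.replicate_succ, List.flatten_cons]
      refine ⟨List.isChain_append.2 ⟨hc, ih.1, ?_⟩, ?_, ?_⟩
      · intro p hp q hq
        rcases ih.2.1 with h | h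
        · simp [h] at hq
        · exact hcyc p hp q (h ▸ hq)
      · right
        rcases List.exists_cons_of_ne_nil hL with ⟨a, L', rfl⟩
        simp
      · rw [P_append, ih.2.2, pow_succ']
  intro h1
  obtain ⟨hchain, _, hprod⟩ := key n
  have : (⟨1, List.flatten (List.replicate n L), hchain⟩ :
      ReducedWord G A B).prod φ ∈
        (HNNExtension.of.range : Subgroup (HNNExtension G A B φ)) := by
    rw [prod_eq_P]
    simp only [map_one, one_mul, hprod, h1]
    exact one_mem _
  have h2 := HNNExtension.ReducedWord.toList_eq_nil_of_mem_of_range φ _ this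
  simp only [List.flatten_eq_nil_iff] at h2
  rcases List.exists_cons_of_ne_nil hL with ⟨a, L', rfl⟩
  rcases Nat.exists_eq_succ_of_ne_zero hn with ⟨m, rfl⟩
  exact absurd (h2 (a :: L') (by simp [List.replicate_succ])) (by simp)

theorem key (hG : Monoid.IsTorsionFree G) :
    ∀ (k : ℕ) (w : ReducedWord G A B), w.toList.length = k →
      w.prod φ ≠ 1 → ∀ n : ℕ, n ≠ 0 → (w.prod φ) ^ n ≠ 1 := by
  intro k
  induction k using Nat.strong_induction_on with
  | _ k ih =>
  intro w hlen hne n hn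
  by_cases hl : w.toList = []
  · have hwp : w.prod φ = HNNExtension.of w.head := by
      rw [prod_eq_P, hl]; simp [P]
    have hhead : w.head ≠ 1 := by
      rintro h; exact hne (by rw [hwp, h, map_one])
    rw [hwp, ← map_pow]
    intro h1
    have h2 : w.head ^ n = 1 := HNNExtension.of_injective (φ := φ)
      (h1.trans (map_one (HNNExtension.of (G := G) (A := A) (B := B) (φ := φ))).symm)
    exact hG w.head hhead (isOfFinOrder_iff_pow_eq_one.2 ⟨n, Nat.pos_of_ne_zero hn, h2⟩)
  · -- nonempty list
    set g₀ := w.head with hg₀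
    set u := (w.toList.getLast hl).1 with hu
    set gl := (w.toList.getLast hl).2 with hgl
    set M := w.toList.dropLast with hM
    have hsplit : M ++ [(u, gl)] = w.toList := by
      rw [hM, hu, hgl]
      simpa using List.dropLast_append_getLast hl
    have hchainw := w.chain
    rw [← hsplit] at hchainw
    obtain ⟨hcM, -, hjunc⟩ := List.isChain_append.1 hchainw
    set L' : List (ℤˣ × G) := M ++ [(u, gl * g₀)] with hL'
    have hchainL' : L'.Chain' (R A B) := by
      refine List.isChain_append.2 ⟨hcM, by simp, ?_⟩
      intro x hx y hy
      simp only [List.head?_cons, Option.mem_def, Option.some_inj] at hy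
      subst hy
      intro hx2
      exact hjunc x hx (u, gl) (by simp) hx2
    have hL'ne : L' ≠ [] := by simp [hL']
    have hy : P φ L' = (HNNExtension.of g₀)⁻¹ * w.prod φ * HNNExtension.of g₀ := by
      rw [prod_eq_P, ← hsplit, hL', P_append, P_append]
      simp [P, mul_assoc, ← hg₀]
    suffices hsuff : (P φ L') ^ n ≠ 1 by
      intro hcon
      apply hsuff
      rw [hy, show (HNNExtension.of g₀ : HNNExtension G A B φ)⁻¹ * w.prod φ *
        HNNExtension.of g₀ = (HNNExtension.of g₀)⁻¹ * w.prod φ *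
          ((HNNExtension.of g₀)⁻¹)⁻¹ by rw [inv_inv], conj_pow, hcon]
      simp
    have hyne : P φ L' ≠ 1 := by
      rw [hy]
      intro hcon
      apply hne
      have := congrArg (fun z => (HNNExtension.of g₀ : HNNExtension G A B φ) * z *
        (HNNExtension.of g₀)⁻¹) hcon
      simp only [mul_assoc] at this
      simpa [← mul_assoc] using this
    by_cases hcyc : ∀ p ∈ L'.getLast?, ∀ q ∈ L'.head?, R A B p q
    · exact pow_ne_one_of_cyclicallyReduced L' hL'ne hchainL' hcyc hn
    · push_neg at hcyc
      obtain ⟨p, hp, q, hq, hnR⟩ := hcyc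
      obtain ⟨hmem, hpq⟩ := hnR
      have hgetlast : L'.getLast? = some (u, gl * g₀) := by
        rw [hL', List.getLast?_concat]
      rw [hgetlast, Option.mem_def, Option.some_inj] at hp
      subst hp
      -- M must be nonempty
      rcases Meq : M with - | ⟨⟨u₁, g₁⟩, M'⟩
      · rw [hL', Meq] at hq
        simp only [List.nil_append, List.head?_cons, Option.mem_def, Option.some_inj] at hq
        subst hq
        exact absurd rfl hpq
      · rw [hL', Meq] at hq
        simp only [List.cons_append, List.head?_cons, Option.mem_def, Option.some_inj] at hq
        subst hq
        simp only at hpq hmem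
        -- u₁ = -u
        have hu₁ : u₁ = -u := by
          rcases Int.units_eq_one_or u with h1 | h1 <;>
            rcases Int.units_eq_one_or u₁ with h2 | h2 <;>
              rw [h1, h2] <;>
                first
                  | decide
                  | (exfalso; exact hpq (by rw [h1, h2]))
        set c' : G := (toSubgroupEquiv φ u ⟨gl * g₀, hmem⟩ : G) with hc'
        set τ : HNNExtension G A B φ := HNNExtension.of c' * (t ^ (u₁ : ℤ))⁻¹ with hτ
        have hchainM' : M'.Chain' (R A B) := by
          rw [hL', Meq, List.cons_append] at hchainL'
          exact ((List.isChain_cons.1 hchainL').2).prefix (List.prefix_append _ _)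
        have hrel : (t ^ (u : ℤ) * HNNExtension.of (gl * g₀) : HNNExtension G A B φ) =
            HNNExtension.of c' * t ^ (u : ℤ) := t_zpow_mul_of _ hmem
        have hPL' : P φ L' = t ^ ((u₁ : ℤˣ) : ℤ) * HNNExtension.of g₁ *
            (P φ M' * (t ^ (u : ℤ) * HNNExtension.of (gl * g₀))) := by
          rw [hL', Meq]
          simp [P, mul_assoc]
        have hww : HNNExtension.of (c' * g₁) * P φ M' = τ * P φ L' * τ⁻¹ := by
          rw [hτ, hPL', hrel, hu₁]
          simp only [Units.val_neg, zpow_neg, map_mul, mul_assoc, inv_inv,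
            inv_mul_cancel_left, mul_inv_cancel_left, mul_inv_rev]
          group
        set w'' : ReducedWord G A B := ⟨c' * g₁, M', hchainM'⟩ with hw''
        have hw''prod : w''.prod φ = τ * P φ L' * τ⁻¹ := by
          rw [prod_eq_P]; exact hww
        have hw''ne : w''.prod φ ≠ 1 := by
          rw [hw''prod]
          intro h
          apply hyne
          have := congrArg (fun z => τ⁻¹ * z * τ) h
          simp only [mul_assoc, inv_mul_cancel_left, mul_one, one_mul,
            inv_mul_cancel, mul_inv_cancel] at this
          simpa [mul_assoc] using this
        have hM'len : M'.length < k := by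
          rw [← hlen, ← hsplit, Meq]
          simp
        have hpow := ih M'.length hM'len w'' rfl hw''ne n hn
        intro hcon
        apply hpow
        rw [hw''prod, conj_pow, hcon]
        simp


theorem hnn_isTorsionFree (hG : Monoid.IsTorsionFree G) :
    Monoid.IsTorsionFree (HNNExtension G A B φ) := by
  intro x hx hfin
  rcases isOfFinOrder_iff_pow_eq_one.1 hfin with ⟨n, hn, hxn⟩
  obtain ⟨d⟩ := HNNExtension.NormalWord.TransversalPair.nonempty G A B
  set w : HNNExtension.NormalWord d := x • HNNExtension.NormalWord.empty with hwdef
  have hw : w.prod φ = x := by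
    rw [hwdef, HNNExtension.NormalWord.prod_smul, HNNExtension.NormalWord.prod_empty, mul_one]
  exact key hG w.toReducedWord.toList.length w.toReducedWord rfl
    (by rw [show w.toReducedWord.prod φ = w.prod φ from rfl, hw]; exact hx) n
    (Nat.pos_iff_ne_zero.mp hn)
    (by rw [show w.toReducedWord.prod φ = w.prod φ from rfl, hw]; exact hxn)



variable {G : Type} [Group G]

instance hnnCountable [Countable G] {A B : Subgroup G} (φ : A ≃* B) :
    Countable (HNNExtension G A B φ) := by
  delta HNNExtension Con.Quotient Monoid.Coprod FreeMonoid; infer_instance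

theorem exists_mulEquiv_zpowers {a b : G} (ha : ¬IsOfFinOrder a) (hb : ¬IsOfFinOrder b) :
    ∃ ψ : (Subgroup.zpowers a) ≃* (Subgroup.zpowers b),
      (ψ ⟨a, Subgroup.mem_zpowers a⟩ : G) = b := by
  have key : ∀ (c : G), ¬IsOfFinOrder c →
      ∃ e : Multiplicative ℤ ≃* Subgroup.zpowers c,
        e (Multiplicative.ofAdd 1) = ⟨c, Subgroup.mem_zpowers c⟩ := by
    intro c hc
    have hinj : Injective (fun k : ℤ => c ^ k) := injective_zpow_iff_not_isOfFinOrder.2 hc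
    let f : Multiplicative ℤ →* Subgroup.zpowers c :=
      { toFun := fun k => ⟨c ^ (Multiplicative.toAdd k), Subgroup.mem_zpowers_iff.2 ⟨_, rfl⟩⟩
        map_one' := by ext; simp
        map_mul' := fun x y => by ext; simp [zpow_add] }
    have hbij : Bijective f := by
      constructor
      · intro x y hxy
        have := congrArg (Subtype.val) hxy
        simpa using Multiplicative.toAdd.injective (hinj this)
      · rintro ⟨x, hx⟩
        rcases Subgroup.mem_zpowers_iff.1 hx with ⟨k, rfl⟩
        exact ⟨Multiplicative.ofAdd k, rfl⟩
    refine ⟨MulEquiv.ofBijective f hbij, ?_⟩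
    ext
    simp [f, MulEquiv.ofBijective]
  obtain ⟨ea, hea⟩ := key a ha
  obtain ⟨eb, heb⟩ := key b hb
  refine ⟨ea.symm.trans eb, ?_⟩
  rw [MulEquiv.trans_apply, ← hea, MulEquiv.symm_apply_apply, heb]

theorem multInt_isTorsionFree : Monoid.IsTorsionFree (Multiplicative ℤ) := by
  intro x hx hfin
  rcases isOfFinOrder_iff_pow_eq_one.1 hfin with ⟨n, hn, hxn⟩
  apply hx
  have : (Multiplicative.toAdd x) * n = 0 := by
    have := congrArg Multiplicative.toAdd hxn
    simpa [toAdd_pow, mul_comm] using this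
  rcases mul_eq_zero.1 this with h | h
  · have : Multiplicative.toAdd x = Multiplicative.toAdd (1 : Multiplicative ℤ) := by
      simpa using h
    exact Multiplicative.toAdd.injective this
  · omega

/-- A stage of the construction. -/
structure St : Type 1 where
  G : GrpCat.{0}
  tf : Monoid.IsTorsionFree G
  cnt : Countable G
  h : ℕ → G

attribute [instance] St.cnt

/-- The data of one step of the construction. -/
structure StepRes (n : ℕ) (S : St) : Type 1 where
  T : St
  f : S.G →* T.G
  inj : Function.Injective f
  compat : ∀ i : ℕ, (Nat.unpair i).1 ≠ n + 1 → T.h i = f (S.h i)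
  cover : ∀ x : T.G, ∃ c : ℕ, T.h (Nat.pair (n + 1) c) = x
  conj : S.h (Nat.unpair n).1 ≠ 1 → S.h (Nat.unpair n).2 ≠ 1 →
      S.h (Nat.unpair n).1 ≠ S.h (Nat.unpair n).2 →
      ∃ τ : T.G, τ * f (S.h (Nat.unpair n).1) * τ⁻¹ = f (S.h (Nat.unpair n).2)

noncomputable def step (n : ℕ) (S : St) : StepRes n S := by
  classical
  set a := S.h (Nat.unpair n).1 with hadef
  set b := S.h (Nat.unpair n).2 with hbdef
  by_cases hC : a ≠ 1 ∧ b ≠ 1 ∧ a ≠ b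
  · obtain ⟨ha1, hb1, hab⟩ := hC
    have hex := exists_mulEquiv_zpowers (S.tf a ha1) (S.tf b hb1)
    set ψ := hex.choose with hψdef
    have hψ := hex.choose_spec
    letI H := HNNExtension S.G (Subgroup.zpowers a) (Subgroup.zpowers b) ψ
    haveI hcnt : Countable H := hnnCountable ψ
    set s : ℕ → H := (exists_surjective_nat H).choose with hsdef
    have hs : Surjective s := (exists_surjective_nat H).choose_spec
    refine
      { T := { G := GrpCat.of H
               tf := hnn_isTorsionFree S.tf
               cnt := hcnt
               h := fun i => if (Nat.unpair i).1 = n + 1 then s (Nat.unpair i).2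
                 else HNNExtension.of (S.h i) }
        f := HNNExtension.of
        inj := HNNExtension.of_injective (φ := ψ)
        compat := fun i hi => by simp [hi]
        cover := fun x => by
          obtain ⟨c, hc⟩ := hs x
          exact ⟨c, by simp [Nat.unpair_pair, hc]⟩
        conj := fun _ _ _ => by
          refine ⟨HNNExtension.t, ?_⟩
          have h0 := HNNExtension.t_mul_of (φ := ψ) ⟨a, Subgroup.mem_zpowers a⟩
          rw [show (ψ ⟨a, Subgroup.mem_zpowers a⟩ : ↑S.G) = b from hψ] at h0
          have h1 : (HNNExtension.t : H) * HNNExtension.of a =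
              HNNExtension.of b * HNNExtension.t := by simpa using h0
          rw [← hadef, ← hbdef, mul_inv_eq_iff_eq_mul]
          exact h1 }
  · set s : ℕ → S.G := (exists_surjective_nat S.G).choose with hsdef
    have hs : Surjective s := (exists_surjective_nat S.G).choose_spec
    refine
      { T := { G := S.G
               tf := S.tf
               cnt := S.cnt
               h := fun i => if (Nat.unpair i).1 = n + 1 then s (Nat.unpair i).2 else S.h i }
        f := MonoidHom.id _
        inj := fun x y hxy => hxy
        compat := fun i hi => by simp [hi]
        cover := fun x => by
          obtain ⟨c, hc⟩ := hs x
          exact ⟨c, by simp [Nat.unpair_pair, hc]⟩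
        conj := fun h1 h2 h3 => absurd ⟨h1, h2, h3⟩ hC }

/-- The base stage: the integers. -/
noncomputable def base : St :=
  { G := GrpCat.of (Multiplicative ℤ)
    tf := multInt_isTorsionFree
    cnt := (inferInstance : Countable (Multiplicative ℤ))
    h := fun i => (exists_surjective_nat (Multiplicative ℤ)).choose (Nat.unpair i).2 }

theorem base_cover : ∀ x : base.G, ∃ c : ℕ, base.h (Nat.pair 0 c) = x := by
  intro x
  obtain ⟨c, hc⟩ := (exists_surjective_nat (Multiplicative ℤ)).choose_spec x
  exact ⟨c, by simp only [base, Nat.unpair_pair]; exact hc⟩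

/-- The chain of groups. -/
noncomputable def chain : ℕ → St :=
  fun n => Nat.rec base (fun m S => (step m S).T) n

/-- The inclusion of one stage in the next. -/
noncomputable def ι (n : ℕ) : (chain n).G →* (chain (n + 1)).G :=
  (step n (chain n)).f

theorem ι_inj (n : ℕ) : Function.Injective (ι n) :=
  (step n (chain n)).inj

/-- The inclusion between any two stages. -/
noncomputable def ιle {m n : ℕ} (h : m ≤ n) : (chain m).G →* (chain n).G :=
  Nat.leRecOn h (fun {k} f => (ι k).comp f) (MonoidHom.id _)

theorem ιle_self (m : ℕ) (x : (chain m).G) : ιle (le_refl m) x = x := by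
  rw [ιle, Nat.leRecOn_self]; rfl

theorem ιle_succ_of_le {m n : ℕ} (h : m ≤ n) (x : (chain m).G) :
    ιle (h.trans (Nat.le_succ n)) x = ι n (ιle h x) := by
  rw [ιle, ιle, Nat.leRecOn_succ h]; rfl

theorem ιle_trans {a b c : ℕ} (hab : a ≤ b) (hbc : b ≤ c) (x : (chain a).G) :
    ιle hbc (ιle hab x) = ιle (hab.trans hbc) x := by
  induction c, hbc using Nat.le_induction with
  | base => rw [ιle_self, ιle]
  | succ n hn ih =>
    rw [ιle_succ_of_le hn (ιle hab x), ih, ← ιle_succ_of_le (hab.trans hn) x]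

theorem ιle_inj {m n : ℕ} (h : m ≤ n) : Function.Injective (ιle (m := m) h) := by
  induction n, h using Nat.le_induction with
  | base => intro x y hxy; rwa [ιle_self, ιle_self] at hxy
  | succ n hn ih =>
    intro x y hxy
    rw [ιle_succ_of_le hn, ιle_succ_of_le hn] at hxy
    exact ih (ι_inj n hxy)

/-- The underlying type of the colimit. -/
def Pre : Type := Σ n : ℕ, (chain n).G

/-- The directed-limit equivalence relation. -/
def rel (p q : Pre) : Prop :=
  ∃ (N : ℕ) (hm : p.1 ≤ N) (hn : q.1 ≤ N), ιle hm p.2 = ιle hn q.2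

theorem rel_elim {p q : Pre} (h : rel p q) {N : ℕ} (hm : p.1 ≤ N) (hn : q.1 ≤ N) :
    ιle hm p.2 = ιle hn q.2 := by
  obtain ⟨M, hm', hn', hM⟩ := h
  set K := max N M with hK
  apply ιle_inj (le_max_left N M)
  rw [ιle_trans hm (le_max_left N M), ιle_trans hn (le_max_left N M)]
  rw [← ιle_trans hm' (le_max_right N M), ← ιle_trans hn' (le_max_right N M), hM]

theorem rel_equiv : Equivalence rel := by
  constructor
  · exact fun p => ⟨p.1, le_refl _, le_refl _, rfl⟩
  · rintro p q ⟨N, hm, hn, h⟩; exact ⟨N, hn, hm, h.symm⟩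
  · rintro p q r hpq hqr
    refine ⟨max p.1 (max q.1 r.1), le_max_left _ _, le_max_of_le_right (le_max_right _ _), ?_⟩
    rw [rel_elim hpq (le_max_left p.1 (max q.1 r.1)) (le_max_of_le_right (le_max_left _ _)),
      rel_elim hqr (le_max_of_le_right (le_max_left q.1 r.1))
        (le_max_of_le_right (le_max_right _ _))]

instance preSetoid : Setoid Pre := ⟨rel, rel_equiv⟩

/-- The colimit group. -/
def Colim : Type := Quotient preSetoid

/-- Canonical map into the colimit. -/
def mk (n : ℕ) (x : (chain n).G) : Colim := Quotient.mk _ ⟨n, x⟩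

theorem mk_surjective : ∀ z : Colim, ∃ n x, mk n x = z := by
  rintro ⟨⟨n, x⟩⟩; exact ⟨n, x, rfl⟩

theorem mk_eq_mk_iff {m n : ℕ} {x : (chain m).G} {y : (chain n).G} :
    mk m x = mk n y ↔ ∃ (N : ℕ) (hm : m ≤ N) (hn : n ≤ N), ιle hm x = ιle hn y :=
  ⟨fun h => Quotient.exact h, fun h => Quotient.sound h⟩

theorem mk_eq_of_le {m n : ℕ} (h : m ≤ n) (x : (chain m).G) :
    mk n (ιle h x) = mk m x :=
  Quotient.sound ⟨n, le_refl n, h, by rw [ιle_self]⟩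

noncomputable instance colimMul : Mul Colim :=
  ⟨Quotient.map₂
    (fun p q => ⟨max p.1 q.1,
      ιle (le_max_left p.1 q.1) p.2 * ιle (le_max_right p.1 q.1) q.2⟩)
    (by
      rintro ⟨m, x⟩ ⟨m', x'⟩ h1 ⟨n, y⟩ ⟨n', y'⟩ h2
      set N := max (max m n) (max m' n') with hN
      refine ⟨N, le_max_left _ _, le_max_right _ _, ?_⟩
      rw [map_mul, map_mul, ιle_trans, ιle_trans, ιle_trans, ιle_trans]
      rw [rel_elim h1 ((le_max_left m n).trans (le_max_left _ _))
        ((le_max_left m' n').trans (le_max_right _ _)),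
        rel_elim h2 ((le_max_right m n).trans (le_max_left _ _))
        ((le_max_right m' n').trans (le_max_right _ _))])⟩

noncomputable instance colimInv : Inv Colim :=
  ⟨Quotient.map (fun p => ⟨p.1, p.2⁻¹⟩)
    (by
      rintro ⟨m, x⟩ ⟨n, y⟩ ⟨N, hm, hn, h⟩
      exact ⟨N, hm, hn, by rw [map_inv, map_inv, h]⟩)⟩

noncomputable instance colimOne : One Colim := ⟨mk 0 1⟩

theorem mk_mul {m n : ℕ} (x : (chain m).G) (y : (chain n).G) :
    mk m x * mk n y =
      mk (max m n) (ιle (le_max_left m n) x * ιle (le_max_right m n) y) := rfl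

theorem mk_mul_same {n : ℕ} (x y : (chain n).G) :
    mk n x * mk n y = mk n (x * y) := by
  rw [mk_mul]
  refine Quotient.sound ⟨max n n, le_refl _, le_max_left n n, ?_⟩
  dsimp only
  rw [ιle_self, map_mul]

theorem mk_inv {n : ℕ} (x : (chain n).G) : (mk n x)⁻¹ = mk n x⁻¹ := rfl

theorem mk_one (n : ℕ) : mk n 1 = 1 := by
  show _ = mk 0 1
  refine Quotient.sound ⟨n, le_refl n, Nat.zero_le n, ?_⟩
  rw [ιle_self, map_one]

noncomputable instance colimGroup : Group Colim where
  mul_assoc a b c := by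
    obtain ⟨na, xa, rfl⟩ := mk_surjective a
    obtain ⟨nb, xb, rfl⟩ := mk_surjective b
    obtain ⟨nc, xc, rfl⟩ := mk_surjective c
    set N := max na (max nb nc) with hN
    rw [show mk na xa = mk N (ιle (le_max_left _ _) xa) from (mk_eq_of_le _ _).symm,
      show mk nb xb = mk N (ιle (le_max_of_le_right (le_max_left nb nc)) xb) from
        (mk_eq_of_le _ _).symm,
      show mk nc xc = mk N (ιle (le_max_of_le_right (le_max_right nb nc)) xc) from
        (mk_eq_of_le _ _).symm,
      mk_mul_same, mk_mul_same, mk_mul_same, mk_mul_same, mul_assoc]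
  one_mul a := by
    obtain ⟨n, x, rfl⟩ := mk_surjective a
    rw [show (1 : Colim) = mk n 1 from (mk_one n).symm, mk_mul_same, one_mul]
  mul_one a := by
    obtain ⟨n, x, rfl⟩ := mk_surjective a
    rw [show (1 : Colim) = mk n 1 from (mk_one n).symm, mk_mul_same, mul_one]
  inv_mul_cancel a := by
    obtain ⟨n, x, rfl⟩ := mk_surjective a
    rw [mk_inv, mk_mul_same, inv_mul_cancel, mk_one]

theorem mk_inj (n : ℕ) : Function.Injective (mk n) := by
  intro x y h
  obtain ⟨N, hm, hn, hN⟩ := mk_eq_mk_iff.1 h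
  have : ιle hm x = ιle hm y := by
    rw [hN]
  exact ιle_inj hm this

theorem mk_pow {n : ℕ} (x : (chain n).G) (k : ℕ) : mk n (x ^ k) = (mk n x) ^ k := by
  induction k with
  | zero => simp [pow_zero, mk_one]
  | succ k ih => rw [pow_succ, pow_succ, ← ih, mk_mul_same]

theorem mk_ι {N : ℕ} (y : (chain N).G) : mk (N + 1) (ι N y) = mk N y := by
  have h : ιle ((le_refl N).trans (Nat.le_succ N)) y = ι N (ιle (le_refl N) y) :=
    ιle_succ_of_le (le_refl N) y
  rw [ιle_self] at h
  rw [← h, mk_eq_of_le]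

instance colimCountable : Countable Colim := by
  haveI : ∀ n : ℕ, Countable ((chain n).G) := fun n => (chain n).cnt
  haveI : Countable Pre := by delta Pre; exact inferInstance
  delta Colim; exact inferInstance

instance colimInfinite : Infinite Colim := by
  refine Infinite.of_injective (fun z : Multiplicative ℤ => mk 0 z) ?_
  intro x y h
  exact mk_inj 0 h

theorem colim_torsionFree : Monoid.IsTorsionFree Colim := by
  intro z hz hfin
  rcases isOfFinOrder_iff_pow_eq_one.1 hfin with ⟨k, hk, hzk⟩
  obtain ⟨n, x, rfl⟩ := mk_surjective z
  have hx : x ≠ 1 := by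
    rintro rfl
    exact hz (mk_one n)
  have : mk n (x ^ k) = mk n 1 := by
    rw [mk_pow, hzk, mk_one]
  exact (chain n).tf x hx
    (isOfFinOrder_iff_pow_eq_one.2 ⟨k, hk, mk_inj n this⟩)

theorem h_stable (i : ℕ) {M : ℕ} (hM : (Nat.unpair i).1 ≤ M) : ∀ N : ℕ, M ≤ N →
    mk N ((chain N).h i) = mk M ((chain M).h i) := by
  intro N hN
  induction N, hN using Nat.le_induction with
  | base => rfl
  | succ N hN ih =>
    have hcompat := (step N (chain N)).compat i (by omega)
    rw [show (chain (N + 1)).h i = (step N (chain N)).T.h i from rfl, hcompat]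
    rw [show ((step N (chain N)).f ((chain N).h i)) = ι N ((chain N).h i) from rfl, mk_ι, ih]

theorem exists_index (z : Colim) :
    ∃ i : ℕ, ∀ N : ℕ, (Nat.unpair i).1 ≤ N → mk N ((chain N).h i) = z := by
  obtain ⟨n, x, rfl⟩ := mk_surjective z
  cases n with
  | zero =>
    obtain ⟨c, hc⟩ := base_cover x
    refine ⟨Nat.pair 0 c, fun N hN => ?_⟩
    have h0 : (Nat.unpair (Nat.pair 0 c)).1 ≤ 0 := by rw [Nat.unpair_pair]
    rw [h_stable _ h0 N (by
      refine le_trans ?_ hN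
      rw [Nat.unpair_pair])]
    exact congrArg (mk 0) hc
  | succ m =>
    obtain ⟨c, hc⟩ := (step m (chain m)).cover x
    refine ⟨Nat.pair (m + 1) c, fun N hN => ?_⟩
    have h0 : (Nat.unpair (Nat.pair (m + 1) c)).1 ≤ m + 1 := by rw [Nat.unpair_pair]
    rw [h_stable _ h0 N (by
      refine le_trans ?_ hN
      rw [Nat.unpair_pair])]
    exact congrArg (mk (m + 1)) hc

theorem colim_conj {x y : Colim} (hx : x ≠ 1) (hy : y ≠ 1) (hxy : x ≠ y) :
    ∃ τ : Colim, τ * x * τ⁻¹ = y := by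
  obtain ⟨i, hi⟩ := exists_index x
  obtain ⟨j, hj⟩ := exists_index y
  set N := Nat.pair i j with hNdef
  have hiN : (Nat.unpair i).1 ≤ N := (Nat.unpair_left_le i).trans (Nat.left_le_pair i j)
  have hjN : (Nat.unpair j).1 ≤ N := (Nat.unpair_left_le j).trans (Nat.right_le_pair i j)
  have hxN : mk N ((chain N).h i) = x := hi N hiN
  have hyN : mk N ((chain N).h j) = y := hj N hjN
  have hup : Nat.unpair N = (i, j) := Nat.unpair_pair i j
  have hconj := (step N (chain N)).conj
  rw [hup] at hconj
  simp only at hconj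
  have ha1 : (chain N).h i ≠ 1 := by
    rintro h
    exact hx (by rw [← hxN, h, mk_one])
  have hb1 : (chain N).h j ≠ 1 := by
    rintro h
    exact hy (by rw [← hyN, h, mk_one])
  have hab : (chain N).h i ≠ (chain N).h j := by
    rintro h
    exact hxy (by rw [← hxN, ← hyN, h])
  obtain ⟨τ₀, hτ₀⟩ := hconj ha1 hb1 hab
  refine ⟨mk (N + 1) τ₀, ?_⟩
  have := congrArg (mk (N + 1)) hτ₀
  erw [← mk_mul_same, ← mk_mul_same, ← mk_inv] at this
  rw [show ((step N (chain N)).f ((chain N).h i)) = ι N ((chain N).h i) from rfl,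
    show ((step N (chain N)).f ((chain N).h j)) = ι N ((chain N).h j) from rfl,
    mk_ι, mk_ι, hxN, hyN] at this
  exact this

theorem colim_simple : IsSimpleGroup Colim := by
  constructor
  intro H hH
  rcases eq_or_ne H ⊥ with h | h
  · exact Or.inl h
  · right
    obtain ⟨⟨x, hxH⟩, hx1⟩ := Subgroup.ne_bot_iff_exists_ne_one.1 h
    have hx1' : x ≠ 1 := by
      simpa [Subtype.ext_iff] using hx1
    ext z
    simp only [Subgroup.mem_top, iff_true]
    rcases eq_or_ne z 1 with rfl | hz1
    · exact one_mem H
    rcases eq_or_ne z x with rfl | hzx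
    · exact hxH
    · obtain ⟨τ, hτ⟩ := colim_conj hx1' hz1 (Ne.symm hzx)
      rw [← hτ]
      exact hH.conj_mem x hxH τ

theorem final : ∃ (G : Type) (_ : Group G), Countable G ∧ Infinite G ∧
    Monoid.IsTorsionFree G ∧ IsSimpleGroup G :=
  ⟨Colim, inferInstance, inferInstance, inferInstance, colim_torsionFree, colim_simple⟩


end TFHNN

/-- There exists a countable, infinite, torsion-free, simple group. -/
theorem stmt5 :
    ∃ (G : Type) (_ : Group G), Countable G ∧ Infinite G ∧
      Monoid.IsTorsionFree G ∧ IsSimpleGroup G := by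
  exact TFHNN.final
end

section
/- Let B be an infinite set. Then there exist a torsion-free simple group H and an injective group homomorphism from the free group F(B) on the basis B into H. -/
namespace HNNTF
open HNNExtension HNNExtension.NormalWord

variable {G : Type*} [Group G] {A B : Subgroup G} (φ : A ≃* B)

/-- abbreviation for the letter function -/
def fu : ℤˣ × G → HNNExtension G A B φ := fun x => t ^ ((x.1 : ℤˣ) : ℤ) * of x.2

lemma prod_eq (w : ReducedWord G A B) :
    w.prod φ = of w.head * (w.toList.map (fu φ)).prod := rfl

lemma exists_reducedWord (x : HNNExtension G A B φ) :
    ∃ w : ReducedWord G A B, w.prod φ = x := by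
  rcases TransversalPair.nonempty G A B with ⟨d⟩
  exact ⟨((NormalWord.equiv φ d) x).toReducedWord, (NormalWord.equiv φ d).left_inv x⟩

lemma t_zpow_conj (u : ℤˣ) (a : toSubgroup A B u) :
    t ^ ((u : ℤˣ) : ℤ) * of (a : G) * t ^ ((-u : ℤˣ) : ℤ) =
      (of (toSubgroupEquiv φ u a : G) : HNNExtension G A B φ) := by
  rcases Int.units_eq_one_or u with rfl | rfl
  · simp; exact (equiv_eq_conj (φ := φ) a).symm
  · simp; exact (equiv_symm_eq_conj (φ := φ) a).symm

/-- The chain relation of reduced words -/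
def R : ℤˣ × G → ℤˣ × G → Prop := fun a b => a.2 ∈ toSubgroup A B a.1 → a.1 = b.1

lemma chain_eq (w : ReducedWord G A B) : w.toList.Chain' (R (A := A) (B := B)) := w.chain

lemma R_congr {a b c : ℤˣ × G} (h : b.1 = c.1) (hab : R (A := A) (B := B) a b) :
    R (A := A) (B := B) a c := fun hm => (hab hm).trans h

/-- modifying the second component of the last element preserves chains -/
lemma chain'_modifyLast {l : List (ℤˣ × G)} (hl : l ≠ []) (x : G)
    (h : l.Chain' (R (A := A) (B := B))) :
    (l.dropLast ++ [((l.getLast hl).1, x)]).Chain' (R (A := A) (B := B)) := by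
  have h' : (l.dropLast ++ [l.getLast hl]).Chain' (R (A := A) (B := B)) := by
    rwa [List.dropLast_append_getLast hl]
  simp only [List.Chain'] at h' ⊢
  rw [List.isChain_append] at h' ⊢
  refine ⟨h'.1, List.isChain_singleton _, ?_⟩
  intro p hp q hq
  simp only [List.head?_cons, Option.mem_def, Option.some.injEq] at hq
  subst hq
  exact R_congr (b := l.getLast hl) rfl (h'.2.2 p hp (l.getLast hl) (by simp))

lemma head?_fst_modifyLast {l : List (ℤˣ × G)} (hl : l ≠ []) (x : G) :
    ((l.dropLast ++ [((l.getLast hl).1, x)]).head?).map Prod.fst =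
      (l.head?).map Prod.fst := by
  match l, hl with
  | [a], _ => simp
  | (a :: b :: l₀), _ =>
    rw [List.dropLast_cons₂, List.getLast_cons (by simp)]
    simp

/-- powers of a cyclically reduced word of positive length are products of
reduced words of positive length. -/
lemma pow_word (w : ReducedWord G A B) (hnil : w.toList ≠ [])
    (hcr : R (A := A) (B := B) ((w.toList.getLast hnil).1, (w.toList.getLast hnil).2 * w.head)
      (w.toList.head hnil)) :
    ∀ n : ℕ, ∃ w' : ReducedWord G A B, w'.prod φ = (w.prod φ) ^ (n + 1) ∧
      w'.toList ≠ [] ∧ w'.head = w.head ∧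
      (w'.toList.head?).map Prod.fst = (w.toList.head?).map Prod.fst := by
  intro n
  induction n with
  | zero => exact ⟨w, by simp, hnil, rfl, rfl⟩
  | succ n ih =>
    obtain ⟨w', hw'prod, hw'nil, hw'head, hw'fst⟩ := ih
    have hMchain : (w.toList.dropLast ++
        [((w.toList.getLast hnil).1, (w.toList.getLast hnil).2 * w.head)]).Chain'
          (R (A := A) (B := B)) := chain'_modifyLast hnil _ w.chain
    have hMlast : (w.toList.dropLast ++
        [((w.toList.getLast hnil).1, (w.toList.getLast hnil).2 * w.head)]).getLast? =
        some ((w.toList.getLast hnil).1, (w.toList.getLast hnil).2 * w.head) :=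
      List.getLast?_concat
    refine ⟨⟨w.head, (w.toList.dropLast ++
        [((w.toList.getLast hnil).1, (w.toList.getLast hnil).2 * w.head)]) ++ w'.toList, ?_⟩,
        ?_, by simp, rfl, ?_⟩
    · rw [List.isChain_append]
      refine ⟨hMchain, w'.chain, ?_⟩
      intro p hp q hq
      rw [hMlast, Option.mem_def, Option.some.injEq] at hp
      subst hp
      have hq1 : q.1 = (w.toList.head hnil).1 := by
        have h5 := hw'fst
        rw [List.head?_eq_head hw'nil, List.head?_eq_head hnil] at h5
        have hq' : w'.toList.head hw'nil = q := by
          rwa [List.head?_eq_head hw'nil, Option.mem_def, Option.some.injEq] at hq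
        rw [← hq']
        exact Option.some_injective _ (by simpa using h5)
      exact R_congr hq1.symm hcr
    · -- the product computation
      show of w.head * (((w.toList.dropLast ++
          [((w.toList.getLast hnil).1, (w.toList.getLast hnil).2 * w.head)]) ++
            w'.toList).map (fu φ)).prod = (w.prod φ) ^ (n + 1 + 1)
      rw [List.map_append, List.prod_append]
      have h1 : (w'.toList.map (fu φ)).prod = (of w.head)⁻¹ * (w.prod φ) ^ (n + 1) := by
        rw [← hw'head, eq_inv_mul_iff_mul_eq, ← prod_eq, hw'prod]
      have h2 : of w.head * (((w.toList.dropLast ++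
          [((w.toList.getLast hnil).1, (w.toList.getLast hnil).2 * w.head)])).map (fu φ)).prod =
          w.prod φ * of w.head := by
        rw [List.map_append, List.prod_append]
        have h3 : fu φ ((w.toList.getLast hnil).1, (w.toList.getLast hnil).2 * w.head) =
            fu φ (w.toList.getLast hnil) * of w.head := by
          simp [fu, mul_assoc]
        have h4 : (w.toList.map (fu φ)).prod =
            (w.toList.dropLast.map (fu φ)).prod * fu φ (w.toList.getLast hnil) := by
          conv_lhs => rw [← List.dropLast_append_getLast hnil]
          rw [List.map_append, List.prod_append]
          simp
        rw [prod_eq, h4]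
        simp [h3, mul_assoc]
      calc of w.head * ((((w.toList.dropLast ++
          [((w.toList.getLast hnil).1, (w.toList.getLast hnil).2 * w.head)])).map (fu φ)).prod *
            (w'.toList.map (fu φ)).prod)
          = (of w.head * (((w.toList.dropLast ++
              [((w.toList.getLast hnil).1,
                (w.toList.getLast hnil).2 * w.head)])).map (fu φ)).prod) *
            (w'.toList.map (fu φ)).prod := by rw [mul_assoc]
        _ = (w.prod φ * of w.head) * ((of w.head)⁻¹ * (w.prod φ) ^ (n + 1)) := by
            rw [h1, h2]
        _ = (w.prod φ) ^ (n + 1 + 1) := by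
            rw [pow_succ']
            group
    · show Option.map Prod.fst (((w.toList.dropLast ++
          [((w.toList.getLast hnil).1, (w.toList.getLast hnil).2 * w.head)]) ++
            w'.toList).head?) = _
      rw [List.head?_append, Option.or_of_isSome (by
        rw [Option.isSome_iff_ne_none]
        simp)]
      exact head?_fst_modifyLast hnil _


lemma units_ne_iff {u v : ℤˣ} (h : u ≠ v) : v = -u := by
  rcases Int.units_eq_one_or u with rfl | rfl <;>
    rcases Int.units_eq_one_or v with rfl | rfl <;> simp_all

lemma exists_conj_of_isOfFinOrder :
    ∀ (k : ℕ) (w : ReducedWord G A B), w.toList.length = k →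
      IsOfFinOrder (w.prod φ) → ∃ c g, w.prod φ = c * of g * c⁻¹ := by
  intro k
  induction k using Nat.strong_induction_on with
  | _ k ih =>
    intro w hk hfin
    rcases eq_or_ne w.toList [] with hnil | hnil
    · exact ⟨1, w.head, by simp [prod_eq, hnil]⟩
    by_cases hcr : R (A := A) (B := B)
        ((w.toList.getLast hnil).1, (w.toList.getLast hnil).2 * w.head) (w.toList.head hnil)
    · -- cyclically reduced: contradiction with finite order
      exfalso
      obtain ⟨n, hn, hyn⟩ := isOfFinOrder_iff_pow_eq_one.mp hfin
      obtain ⟨m, rfl⟩ : ∃ m, n = m + 1 := ⟨n - 1, (Nat.succ_pred_eq_of_pos hn).symm⟩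
      obtain ⟨w', hw'prod, hw'nil, -, -⟩ := pow_word φ w hnil hcr m
      refine hw'nil (ReducedWord.toList_eq_nil_of_mem_of_range φ w' ?_)
      rw [hw'prod, hyn]
      exact one_mem _
    · -- not cyclically reduced: pass to a conjugate with shorter word
      rw [R, _root_.not_imp] at hcr
      obtain ⟨hmem, hne⟩ := hcr
      obtain ⟨a, tail, hl⟩ : ∃ a t, w.toList = a :: t := by
        cases hltl : w.toList with
        | nil => exact absurd hltl hnil
        | cons a t => exact ⟨a, t, rfl⟩
      have htn : tail ≠ [] := by
        rintro rfl
        apply hne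
        have h1 : w.toList.getLast hnil = a := by
          simp [hl, List.getLast_eq_iff_getLast?_eq_some]
        have h2 : w.toList.head hnil = a := by simp [hl]
        rw [h1, h2]
      have hga : w.toList.getLast hnil = tail.getLast htn := by
        rw [List.getLast_eq_iff_getLast?_eq_some, hl]
        cases tail with
        | nil => exact absurd rfl htn
        | cons b0 r =>
          rw [List.getLast?_cons_cons]
          exact (List.getLast_eq_iff_getLast?_eq_some _).mp rfl
      have hha : w.toList.head hnil = a := by simp [hl]
      set q : ℤˣ × G := tail.getLast htn with hq
      rw [hga] at hmem
      rw [hga, hha] at hne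
      have ha1 : a.1 = -q.1 := units_ne_iff hne
      set b : G := (toSubgroupEquiv φ q.1 ⟨q.2 * w.head, hmem⟩ : G) with hb
      set c : HNNExtension G A B φ := of w.head * fu φ a with hc
      set mid : List (ℤˣ × G) := tail.dropLast with hmid
      have htail : tail = mid ++ [q] := (List.dropLast_append_getLast htn).symm
      -- the conjugated element
      have hfq : fu φ q * of w.head * fu φ a = of (b * a.2) := by
        show (t ^ ((q.1 : ℤˣ) : ℤ) * of q.2) * of w.head *
          (t ^ ((a.1 : ℤˣ) : ℤ) * of a.2) = of (b * a.2)
        rw [ha1, map_mul]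
        have h0 : t ^ ((q.1 : ℤˣ) : ℤ) * of (q.2 * w.head) * t ^ ((-q.1 : ℤˣ) : ℤ) =
            (of b : HNNExtension G A B φ) := t_zpow_conj φ q.1 ⟨q.2 * w.head, hmem⟩
        calc t ^ ((q.1 : ℤˣ) : ℤ) * of q.2 * of w.head * (t ^ ((-q.1 : ℤˣ) : ℤ) * of a.2)
            = (t ^ ((q.1 : ℤˣ) : ℤ) * of (q.2 * w.head) * t ^ ((-q.1 : ℤˣ) : ℤ)) * of a.2 := by
              rw [map_mul]; group
          _ = of b * of a.2 := by rw [h0]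
      have hz : c⁻¹ * w.prod φ * c = (mid.map (fu φ)).prod * of (b * a.2) := by
        rw [prod_eq, hl, htail]
        simp only [List.map_cons, List.map_append, List.prod_cons, List.prod_append,
          List.map_singleton, List.prod_singleton, List.map_nil, List.prod_nil, mul_one,
          one_mul, hc]
        rw [← hfq]
        group
      rcases eq_or_ne mid [] with hmn | hmn
      · refine ⟨c, b * a.2, ?_⟩
        have : c⁻¹ * w.prod φ * c = of (b * a.2) := by rw [hz, hmn]; simp
        rw [← this]; group
      · -- shorter word
        have hmidchain : mid.Chain' (R (A := A) (B := B)) := by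
          have h1 : (a :: tail).Chain' (R (A := A) (B := B)) := hl ▸ w.chain
          exact (List.isChain_cons.mp h1).2.prefix (List.dropLast_prefix tail)
        set W : ReducedWord G A B :=
          ⟨1, mid.dropLast ++ [((mid.getLast hmn).1, (mid.getLast hmn).2 * (b * a.2))],
            chain'_modifyLast hmn _ hmidchain⟩ with hW
        have hWprod : W.prod φ = (mid.map (fu φ)).prod * of (b * a.2) := by
          rw [prod_eq]
          show of 1 * ((mid.dropLast ++
            [((mid.getLast hmn).1, (mid.getLast hmn).2 * (b * a.2))]).map (fu φ)).prod = _
          rw [map_one, one_mul, List.map_append, List.prod_append]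
          have h3 : fu φ ((mid.getLast hmn).1, (mid.getLast hmn).2 * (b * a.2)) =
              fu φ (mid.getLast hmn) * of (b * a.2) := by simp [fu, mul_assoc]
          have h4 : (mid.map (fu φ)).prod =
              (mid.dropLast.map (fu φ)).prod * fu φ (mid.getLast hmn) := by
            conv_lhs => rw [← List.dropLast_append_getLast hmn]
            rw [List.map_append, List.prod_append]
            simp
          rw [h4]
          simp [h3, mul_assoc]
        have hWz : W.prod φ = c⁻¹ * w.prod φ * c := by rw [hWprod, hz]
        have hWlen : W.toList.length < k := by
          show (mid.dropLast ++ _).length < k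
          rw [← hk, hl, htail]
          simp only [List.length_append, List.length_cons, List.length_singleton]
          have : mid.dropLast.length < mid.length := by
            rw [List.length_dropLast]
            exact Nat.pred_lt (by simpa using hmn)
          omega
        have hWfin : IsOfFinOrder (W.prod φ) := by
          obtain ⟨n, hn, hpow⟩ := isOfFinOrder_iff_pow_eq_one.mp hfin
          refine isOfFinOrder_iff_pow_eq_one.mpr ⟨n, hn, ?_⟩
          rw [hWz]
          have : c⁻¹ * w.prod φ * c = c⁻¹ * w.prod φ * (c⁻¹)⁻¹ := by rw [inv_inv]
          rw [this, conj_pow, hpow]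
          group
        obtain ⟨d, g, hd⟩ := ih W.toList.length hWlen W rfl hWfin
        refine ⟨c * d, g, ?_⟩
        have hwp : w.prod φ = c * W.prod φ * c⁻¹ := by rw [hWz]; group
        rw [hwp, hd]
        group

theorem hnn_isTorsionFree (hG : Monoid.IsTorsionFree G) :
    Monoid.IsTorsionFree (HNNExtension G A B φ) := by
  intro x hx hfin
  obtain ⟨w, hw⟩ := exists_reducedWord φ x
  obtain ⟨c, g, hcg⟩ := exists_conj_of_isOfFinOrder φ _ w rfl (hw ▸ hfin)
  rw [← hw, hcg] at hfin hx
  have hg1 : g ≠ 1 := by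
    rintro rfl
    simp at hx
  obtain ⟨n, hn, hpow⟩ := isOfFinOrder_iff_pow_eq_one.mp hfin
  rw [conj_pow, mul_inv_eq_one, mul_eq_left, ← map_pow] at hpow
  have hgn : (g : G) ^ n = 1 := of_injective (G := G) (A := A) (B := B) φ
    (by simpa using hpow)
  exact hG g hg1 (isOfFinOrder_iff_pow_eq_one.mpr ⟨n, hn, hgn⟩)


open Cardinal in
lemma hnn_card_le {G : Type u} [Group G] [Infinite G] {A B : Subgroup G} (φ : A ≃* B) :
    #(HNNExtension G A B φ) ≤ #G := by
  classical
  have hcl' : ∀ x : HNNExtension G A B φ,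
      x ∈ Subgroup.closure (Set.range (of : G → HNNExtension G A B φ) ∪ {t}) := by
    intro x
    induction x using HNNExtension.induction_on with
    | of g => exact Subgroup.subset_closure (Or.inl ⟨g, rfl⟩)
    | t => exact Subgroup.subset_closure (Or.inr rfl)
    | mul x y hx hy => exact mul_mem hx hy
    | inv x hx => exact inv_mem hx
  have hcl : Subgroup.closure (Set.range (of : G → HNNExtension G A B φ) ∪ {t}) = ⊤ := by
    rw [eq_top_iff]
    exact fun x _ => hcl' x
  set F : FreeGroup (Option G) →* HNNExtension G A B φ :=
    FreeGroup.lift (fun x => Option.elim x t of) with hF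
  have hFsurj : Function.Surjective F := by
    rw [← MonoidHom.range_eq_top, FreeGroup.range_lift_eq_closure, eq_top_iff, ← hcl]
    apply Subgroup.closure_mono
    rintro x (⟨g, rfl⟩ | rfl)
    · exact ⟨some g, rfl⟩
    · exact ⟨none, rfl⟩
  have h2G : (2 : Cardinal) ≤ #G :=
    ((by exact_mod_cast Cardinal.nat_lt_aleph0 2 : (2 : Cardinal) < ℵ₀)).le.trans
      (Cardinal.aleph0_le_mk G)
  calc #(HNNExtension G A B φ) ≤ #(FreeGroup (Option G)) := mk_le_of_surjective hFsurj
    _ ≤ #(List ((Option G) × Bool)) :=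
        mk_le_of_surjective (f := FreeGroup.mk) (fun x => ⟨x.toWord, x.mk_toWord⟩)
    _ = #((Option G) × Bool) := mk_list_eq_mk _
    _ = #G := by
        rw [mk_prod, mk_bool, Cardinal.lift_two, Cardinal.lift_uzero, mk_option,
          Cardinal.add_one_eq (Cardinal.aleph0_le_mk G)]
        exact Cardinal.mul_eq_left (Cardinal.aleph0_le_mk G) h2G two_ne_zero

open Cardinal in
theorem hnn_step {G : Type u} [Group G] (hG : Monoid.IsTorsionFree G) {a b : G}
    (ha : a ≠ 1) (hb : b ≠ 1) :
    ∃ (H : Type u) (_ : Group H) (f : G →* H), Function.Injective f ∧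
      Monoid.IsTorsionFree H ∧ IsConj (f a) (f b) ∧ #H ≤ #G := by
  have hao : ¬IsOfFinOrder a := hG a ha
  have hbo : ¬IsOfFinOrder b := hG b hb
  haveI : Infinite G :=
    Infinite.of_injective (fun n : ℤ => a ^ n) (injective_zpow_iff_not_isOfFinOrder.mpr hao)
  -- the isomorphism between the cyclic subgroups
  have mka : ∀ n : Multiplicative ℤ, a ^ (n.toAdd) ∈ Subgroup.zpowers a :=
    fun n => Subgroup.zpow_mem _ (Subgroup.mem_zpowers a) _
  have mkb : ∀ n : Multiplicative ℤ, b ^ (n.toAdd) ∈ Subgroup.zpowers b :=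
    fun n => Subgroup.zpow_mem _ (Subgroup.mem_zpowers b) _
  set ψa : Multiplicative ℤ →* Subgroup.zpowers a :=
    (zpowersHom G a).codRestrict _ mka with hψa
  set ψb : Multiplicative ℤ →* Subgroup.zpowers b :=
    (zpowersHom G b).codRestrict _ mkb with hψb
  have hψabij : Function.Bijective ψa := by
    constructor
    · intro m n hmn
      have : a ^ (m.toAdd) = a ^ (n.toAdd) := congr_arg Subtype.val hmn
      exact injective_zpow_iff_not_isOfFinOrder.mpr hao this
    · rintro ⟨x, k, rfl⟩
      exact ⟨Multiplicative.ofAdd k, rfl⟩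
  have hψbbij : Function.Bijective ψb := by
    constructor
    · intro m n hmn
      have : b ^ (m.toAdd) = b ^ (n.toAdd) := congr_arg Subtype.val hmn
      exact injective_zpow_iff_not_isOfFinOrder.mpr hbo this
    · rintro ⟨x, k, rfl⟩
      exact ⟨Multiplicative.ofAdd k, rfl⟩
  set ea : Multiplicative ℤ ≃* Subgroup.zpowers a := MulEquiv.ofBijective ψa hψabij with hea
  set eb : Multiplicative ℤ ≃* Subgroup.zpowers b := MulEquiv.ofBijective ψb hψbbij with heb
  set φ : (Subgroup.zpowers a : Subgroup G) ≃* (Subgroup.zpowers b : Subgroup G) :=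
    ea.symm.trans eb with hφ
  have hφa : φ ⟨a, Subgroup.mem_zpowers a⟩ = ⟨b, Subgroup.mem_zpowers b⟩ := by
    have h1 : ea (Multiplicative.ofAdd 1) = ⟨a, Subgroup.mem_zpowers a⟩ := by
      apply Subtype.ext
      show a ^ (1 : ℤ) = a
      simp
    have h2 : ea.symm ⟨a, Subgroup.mem_zpowers a⟩ = Multiplicative.ofAdd 1 := by
      rw [← h1, MulEquiv.symm_apply_apply]
    show eb (ea.symm ⟨a, Subgroup.mem_zpowers a⟩) = _
    rw [h2]
    apply Subtype.ext
    show b ^ (1 : ℤ) = b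
    simp
  refine ⟨HNNExtension G (Subgroup.zpowers a) (Subgroup.zpowers b) φ, inferInstance, of,
    of_injective φ, hnn_isTorsionFree φ hG, ?_, hnn_card_le φ⟩
  rw [isConj_iff]
  refine ⟨t, ?_⟩
  have := (equiv_eq_conj (φ := φ) ⟨a, Subgroup.mem_zpowers a⟩).symm
  rw [hφa] at this
  exact this


/-! ### Partial groups on an ambient type -/

variable {V : Type u}

/-- A group structure on a subset of `V`, with junk values outside. -/
structure PartialGroup (V : Type u) where
  carrier : Set V
  one : V
  mul : V → V → V
  inv : V → V
  one_mem : one ∈ carrier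
  mul_mem : ∀ x ∈ carrier, ∀ y ∈ carrier, mul x y ∈ carrier
  inv_mem : ∀ x ∈ carrier, inv x ∈ carrier
  mul_assoc' : ∀ x ∈ carrier, ∀ y ∈ carrier, ∀ z ∈ carrier,
    mul (mul x y) z = mul x (mul y z)
  one_mul' : ∀ x ∈ carrier, mul one x = x
  inv_mul' : ∀ x ∈ carrier, mul (inv x) x = one

namespace PartialGroup

instance : Preorder (PartialGroup V) where
  le K K' := K.carrier ⊆ K'.carrier ∧ K.one = K'.one ∧
    (∀ x ∈ K.carrier, ∀ y ∈ K.carrier, K.mul x y = K'.mul x y) ∧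
    (∀ x ∈ K.carrier, K.inv x = K'.inv x)
  le_refl K := ⟨le_refl _, rfl, fun _ _ _ _ => rfl, fun _ _ => rfl⟩
  le_trans K₁ K₂ K₃ h h' :=
    ⟨h.1.trans h'.1, h.2.1.trans h'.2.1,
      fun x hx y hy => (h.2.2.1 x hx y hy).trans (h'.2.2.1 x (h.1 hx) y (h.1 hy)),
      fun x hx => (h.2.2.2 x hx).trans (h'.2.2.2 x (h.1 hx))⟩

/-- The underlying type of a partial group. -/
abbrev Grp (K : PartialGroup V) : Type u := {x : V // x ∈ K.carrier}

instance (K : PartialGroup V) : One K.Grp := ⟨⟨K.one, K.one_mem⟩⟩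
instance (K : PartialGroup V) : Mul K.Grp :=
  ⟨fun a b => ⟨K.mul a b, K.mul_mem _ a.2 _ b.2⟩⟩
instance (K : PartialGroup V) : Inv K.Grp := ⟨fun a => ⟨K.inv a, K.inv_mem _ a.2⟩⟩

noncomputable instance (K : PartialGroup V) : Group K.Grp :=
  Group.ofLeftAxioms
    (fun a b c => Subtype.ext (K.mul_assoc' _ a.2 _ b.2 _ c.2))
    (fun a => Subtype.ext (K.one_mul' _ a.2))
    (fun a => Subtype.ext (K.inv_mul' _ a.2))

@[simp] lemma val_mul (K : PartialGroup V) (a b : K.Grp) :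
    ((a * b : K.Grp) : V) = K.mul a b := rfl
@[simp] lemma val_one (K : PartialGroup V) : ((1 : K.Grp) : V) = K.one := rfl
@[simp] lemma val_inv (K : PartialGroup V) (a : K.Grp) :
    ((a⁻¹ : K.Grp) : V) = K.inv a := rfl

/-- Inclusion homomorphism. -/
noncomputable def incl {K K' : PartialGroup V} (h : K ≤ K') : K.Grp →* K'.Grp :=
  MonoidHom.mk' (fun a => ⟨a.1, h.1 a.2⟩)
    (fun a b => Subtype.ext (h.2.2.1 _ a.2 _ b.2))

@[simp] lemma incl_val {K K' : PartialGroup V} (h : K ≤ K') (a : K.Grp) :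
    ((incl h a : K'.Grp) : V) = (a : V) := rfl

lemma incl_injective {K K' : PartialGroup V} (h : K ≤ K') :
    Function.Injective (incl h) := fun a b hab =>
  Subtype.ext (show (a : V) = (b : V) from congr_arg (Subtype.val : K'.Grp → V) hab)

lemma isOfFinOrder_hom {M N : Type*} [Group M] [Group N] (g : M →* N)
    {x : M} (h : IsOfFinOrder x) : IsOfFinOrder (g x) := by
  obtain ⟨n, hn, hpow⟩ := isOfFinOrder_iff_pow_eq_one.mp h
  exact isOfFinOrder_iff_pow_eq_one.mpr ⟨n, hn, by rw [← map_pow, hpow, map_one]⟩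

lemma isOfFinOrder_of_injective {M N : Type*} [Group M] [Group N] (g : M →* N)
    (hg : Function.Injective g) {x : M} (h : IsOfFinOrder (g x)) : IsOfFinOrder x := by
  obtain ⟨n, hn, hpow⟩ := isOfFinOrder_iff_pow_eq_one.mp h
  refine isOfFinOrder_iff_pow_eq_one.mpr ⟨n, hn, hg ?_⟩
  rw [map_pow, hpow, map_one]

/-- Torsion freeness of a partial group. -/
def IsTF (K : PartialGroup V) : Prop := Monoid.IsTorsionFree K.Grp

lemma isTF_of_le {K K' : PartialGroup V} (h : K ≤ K') (h' : IsTF K') : IsTF K := by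
  intro x hx hfin
  refine h' (incl h x) (fun h1 => hx ?_) (isOfFinOrder_hom _ hfin)
  apply incl_injective h
  rw [h1, map_one]

/-- `x` and `y` are conjugate inside `K`. -/
def ConjIn (K : PartialGroup V) (x y : V) : Prop :=
  ∃ (hx : x ∈ K.carrier) (hy : y ∈ K.carrier),
    IsConj (⟨x, hx⟩ : K.Grp) (⟨y, hy⟩ : K.Grp)

lemma ConjIn.mono {K K' : PartialGroup V} (h : K ≤ K') {x y : V}
    (hc : ConjIn K x y) : ConjIn K' x y := by
  obtain ⟨hx, hy, c, hc⟩ := hc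
  refine ⟨h.1 hx, h.1 hy, ?_⟩
  rw [SemiconjBy] at hc
  refine isConj_iff.mpr ⟨incl h c, ?_⟩
  have := congr_arg (incl h) (mul_inv_eq_iff_eq_mul.mpr (by rw [hc] : (c : K.Grp) * ⟨x, hx⟩ = ⟨y, hy⟩ * c))
  rw [map_mul, map_mul, map_inv] at this
  exact Subtype.ext (congr_arg Subtype.val this)

section Union

variable {ι : Sort*} (f : ι → PartialGroup V)

open scoped Classical in
noncomputable def pmul : V → V → V := fun x y =>
  if h : ∃ i, x ∈ (f i).carrier ∧ y ∈ (f i).carrier then (f h.choose).mul x y else x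

open scoped Classical in
noncomputable def pinv : V → V := fun x =>
  if h : ∃ i, x ∈ (f i).carrier then (f h.choose).inv x else x

lemma one_eq_of_dir (hdir : Directed (· ≤ ·) f) (i j : ι) : (f i).one = (f j).one := by
  obtain ⟨k, hik, hjk⟩ := hdir i j
  rw [hik.2.1, hjk.2.1]

lemma mul_eq_of_dir (hdir : Directed (· ≤ ·) f) {i j : ι} {x y : V} (hxi : x ∈ (f i).carrier) (hyi : y ∈ (f i).carrier)
    (hxj : x ∈ (f j).carrier) (hyj : y ∈ (f j).carrier) :
    (f i).mul x y = (f j).mul x y := by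
  obtain ⟨k, hik, hjk⟩ := hdir i j
  rw [hik.2.2.1 x hxi y hyi, hjk.2.2.1 x hxj y hyj]

lemma pmul_eq (hdir : Directed (· ≤ ·) f) {i : ι} {x y : V} (hx : x ∈ (f i).carrier) (hy : y ∈ (f i).carrier) :
    pmul f x y = (f i).mul x y := by
  rw [pmul, dif_pos ⟨i, hx, hy⟩]
  exact mul_eq_of_dir f hdir (Exists.choose_spec (⟨i, hx, hy⟩ :
    ∃ i, x ∈ (f i).carrier ∧ y ∈ (f i).carrier)).1
    (Exists.choose_spec (⟨i, hx, hy⟩ :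
      ∃ i, x ∈ (f i).carrier ∧ y ∈ (f i).carrier)).2 hx hy

lemma pinv_eq (hdir : Directed (· ≤ ·) f) {i : ι} {x : V} (hx : x ∈ (f i).carrier) :
    pinv f x = (f i).inv x := by
  rw [pinv, dif_pos ⟨i, hx⟩]
  obtain ⟨k, h1k, h2k⟩ := hdir (Exists.choose (⟨i, hx⟩ : ∃ i, x ∈ (f i).carrier)) i
  rw [h1k.2.2.2 x (Exists.choose_spec (⟨i, hx⟩ : ∃ i, x ∈ (f i).carrier)),
    h2k.2.2.2 x hx]

/-- Union of a directed family of partial groups. -/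
noncomputable def iUnionPG [Nonempty ι] (hdir : Directed (· ≤ ·) f) : PartialGroup V where
  carrier := ⋃ i, (f i).carrier
  one := (f (Classical.arbitrary ι)).one
  mul := pmul f
  inv := pinv f
  one_mem := Set.mem_iUnion.mpr ⟨Classical.arbitrary ι, (f _).one_mem⟩
  mul_mem := by
    intro x hx y hy
    obtain ⟨i, hxi⟩ := Set.mem_iUnion.mp hx
    obtain ⟨j, hyj⟩ := Set.mem_iUnion.mp hy
    obtain ⟨k, hik, hjk⟩ := hdir i j
    rw [pmul_eq f hdir (hik.1 hxi) (hjk.1 hyj)]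
    exact Set.mem_iUnion.mpr ⟨k, (f k).mul_mem _ (hik.1 hxi) _ (hjk.1 hyj)⟩
  inv_mem := by
    intro x hx
    obtain ⟨i, hxi⟩ := Set.mem_iUnion.mp hx
    rw [pinv_eq f hdir hxi]
    exact Set.mem_iUnion.mpr ⟨i, (f i).inv_mem _ hxi⟩
  mul_assoc' := by
    intro x hx y hy z hz
    obtain ⟨i, hxi⟩ := Set.mem_iUnion.mp hx
    obtain ⟨j, hyj⟩ := Set.mem_iUnion.mp hy
    obtain ⟨l, hzl⟩ := Set.mem_iUnion.mp hz
    obtain ⟨k0, hik, hjk⟩ := hdir i j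
    obtain ⟨k, h0k, hlk⟩ := hdir k0 l
    have hxk : x ∈ (f k).carrier := h0k.1 (hik.1 hxi)
    have hyk : y ∈ (f k).carrier := h0k.1 (hjk.1 hyj)
    have hzk : z ∈ (f k).carrier := hlk.1 hzl
    rw [pmul_eq f hdir hxk hyk, pmul_eq f hdir ((f k).mul_mem _ hxk _ hyk) hzk,
      pmul_eq f hdir hyk hzk, pmul_eq f hdir hxk ((f k).mul_mem _ hyk _ hzk)]
    exact (f k).mul_assoc' _ hxk _ hyk _ hzk
  one_mul' := by
    intro x hx
    obtain ⟨i, hxi⟩ := Set.mem_iUnion.mp hx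
    obtain ⟨k, hik, hjk⟩ := hdir i (Classical.arbitrary ι)
    rw [pmul_eq f hdir (hjk.1 (f _).one_mem) (hik.1 hxi), hjk.2.1]
    exact (f k).one_mul' _ (hik.1 hxi)
  inv_mul' := by
    intro x hx
    obtain ⟨i, hxi⟩ := Set.mem_iUnion.mp hx
    obtain ⟨k, hik, hjk⟩ := hdir i (Classical.arbitrary ι)
    have hxk : x ∈ (f k).carrier := hik.1 hxi
    rw [pinv_eq f hdir hxk, pmul_eq f hdir ((f k).inv_mem _ hxk) hxk,
      (f k).inv_mul' _ hxk, one_eq_of_dir f hdir k _]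

lemma le_iUnionPG [Nonempty ι] (hdir : Directed (· ≤ ·) f) (i : ι) : f i ≤ iUnionPG f hdir := by
  refine ⟨fun x hx => Set.mem_iUnion.mpr ⟨i, hx⟩, ?_, ?_, ?_⟩
  · exact one_eq_of_dir f hdir i _
  · intro x hx y hy
    exact (pmul_eq f hdir hx hy).symm
  · intro x hx
    exact (pinv_eq f hdir hx).symm

lemma isTF_iUnionPG [Nonempty ι] (hdir : Directed (· ≤ ·) f) (htf : ∀ i, IsTF (f i)) : IsTF (iUnionPG f hdir) := by
  intro x hx hfin
  obtain ⟨i, hxi⟩ := Set.mem_iUnion.mp x.2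
  set y : (f i).Grp := ⟨(x : V), hxi⟩ with hy
  have hxy : incl (le_iUnionPG f hdir i) y = x := Subtype.ext rfl
  have hy1 : y ≠ 1 := by
    intro h1
    apply hx
    rw [← hxy, h1, map_one]
  refine htf i y hy1 (isOfFinOrder_of_injective _ (incl_injective (le_iUnionPG f hdir i)) ?_)
  rwa [hxy]

end Union

section OfInj

variable {X : Type u} [Group X] (θ : X → V) (hθ : Function.Injective θ)

/-- Transport of a group structure along an injection into `V`. -/
noncomputable def ofInj : PartialGroup V where
  carrier := Set.range θ
  one := θ 1
  mul x y := θ (Function.invFun θ x * Function.invFun θ y)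
  inv x := θ (Function.invFun θ x)⁻¹
  one_mem := ⟨1, rfl⟩
  mul_mem := by rintro x - y -; exact ⟨_, rfl⟩
  inv_mem := by rintro x -; exact ⟨_, rfl⟩
  mul_assoc' := by
    rintro _ ⟨a, rfl⟩ _ ⟨b, rfl⟩ _ ⟨c, rfl⟩
    simp only [Function.leftInverse_invFun hθ _]
    rw [mul_assoc]
  one_mul' := by
    rintro _ ⟨a, rfl⟩
    simp only [Function.leftInverse_invFun hθ _]
    rw [one_mul]
  inv_mul' := by
    rintro _ ⟨a, rfl⟩
    simp only [Function.leftInverse_invFun hθ _]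
    rw [inv_mul_cancel]

/-- The isomorphism `X ≃* (ofInj θ hθ).Grp`. -/
noncomputable def ofInjEquiv : X ≃* (ofInj θ hθ).Grp where
  toFun x := ⟨θ x, x, rfl⟩
  invFun y := Function.invFun θ (y : V)
  left_inv x := Function.leftInverse_invFun hθ x
  right_inv := by
    rintro ⟨_, a, rfl⟩
    simp only [Function.leftInverse_invFun hθ _]
  map_mul' x y := by
    refine Subtype.ext ?_
    show θ (x * y) = (ofInj θ hθ).mul (θ x) (θ y)
    show θ (x * y) = θ (Function.invFun θ (θ x) * Function.invFun θ (θ y))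
    simp only [Function.leftInverse_invFun hθ _]

@[simp] lemma ofInjEquiv_val (x : X) : ((ofInjEquiv θ hθ x : (ofInj θ hθ).Grp) : V) = θ x := rfl

lemma isTF_ofInj (h : Monoid.IsTorsionFree X) : IsTF (ofInj θ hθ) := by
  intro x hx hfin
  set e := ofInjEquiv θ hθ
  refine h (e.symm x) (fun h1 => hx ?_) ?_
  · rw [← e.apply_symm_apply x, h1, map_one]
  · exact isOfFinOrder_hom e.symm.toMonoidHom hfin

open Cardinal in
lemma card_ofInj : #((ofInj θ hθ).carrier) = #X := Cardinal.mk_range_eq θ hθ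

end OfInj

end PartialGroup


namespace PartialGroup

open Cardinal

lemma isConj_hom {M N : Type*} [Group M] [Group N] (g : M →* N) {u v : M}
    (h : IsConj u v) : IsConj (g u) (g v) := by
  obtain ⟨c, hc⟩ := isConj_iff.mp h
  exact isConj_iff.mpr ⟨g c, by rw [← map_inv, ← map_mul, ← map_mul, hc]⟩

lemma card_Grp (K : PartialGroup V) : #K.Grp = #K.carrier := rfl

lemma pg_step [Infinite V] {K : PartialGroup V} (htf : K.IsTF)
    (hsmall : #K.carrier < #V) {x y : V} (hx : x ∈ K.carrier) (hy : y ∈ K.carrier)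
    (hx1 : x ≠ K.one) (hy1 : y ≠ K.one) :
    ∃ K' : PartialGroup V, K ≤ K' ∧ K'.IsTF ∧ #K'.carrier ≤ #K.carrier ∧
      K'.ConjIn x y := by
  classical
  have ha : (⟨x, hx⟩ : K.Grp) ≠ 1 := fun h => hx1 (congr_arg Subtype.val h)
  have hb : (⟨y, hy⟩ : K.Grp) ≠ 1 := fun h => hy1 (congr_arg Subtype.val h)
  obtain ⟨H, gH, fH, hfinj, htfH, hconj, hcard⟩ := hnn_step htf ha hb
  have hHle : #H ≤ #K.carrier := hcard
  have hroom : #H ≤ #(↥(K.carrierᶜ)) := by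
    rw [mk_compl_of_infinite K.carrier hsmall]
    exact hHle.trans hsmall.le
  obtain ⟨ψ⟩ := (Cardinal.le_def _ _).mp hroom
  set θ : H → V := fun h =>
    if hh : ∃ k : K.Grp, fH k = h then ((hh.choose : K.Grp) : V) else (ψ h : V) with hθ
  have hθf : ∀ k : K.Grp, θ (fH k) = (k : V) := by
    intro k
    have hh : ∃ k', fH k' = fH k := ⟨k, rfl⟩
    rw [hθ]
    simp only
    rw [dif_pos hh]
    exact congr_arg Subtype.val (hfinj hh.choose_spec)
  have hθmem : ∀ h : H, (¬ ∃ k, fH k = h) → θ h ∈ K.carrierᶜ := by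
    intro h hh
    rw [hθ]
    simp only
    rw [dif_neg hh]
    exact (ψ h).2
  have hθmem' : ∀ h : H, (∃ k, fH k = h) → θ h ∈ K.carrier := by
    rintro _ ⟨k, rfl⟩
    rw [hθf k]
    exact k.2
  have hθinj : Function.Injective θ := by
    intro h1 h2 he
    by_cases c1 : ∃ k, fH k = h1 <;> by_cases c2 : ∃ k, fH k = h2
    · obtain ⟨k1, rfl⟩ := c1
      obtain ⟨k2, rfl⟩ := c2
      rw [hθf, hθf] at he
      rw [Subtype.ext he]
    · exact absurd (he ▸ hθmem' h1 c1) (hθmem h2 c2)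
    · exact absurd (he ▸ hθmem' h2 c2) (hθmem h1 c1)
    · have e1 : θ h1 = (ψ h1 : V) := by rw [hθ]; simp only; rw [dif_neg c1]
      have e2 : θ h2 = (ψ h2 : V) := by rw [hθ]; simp only; rw [dif_neg c2]
      rw [e1, e2] at he
      exact ψ.injective (Subtype.ext he)
  refine ⟨ofInj θ hθinj, ?_, isTF_ofInj θ hθinj htfH, ?_, ?_⟩
  · -- K ≤ K'
    have hinv : ∀ v (hv : v ∈ K.carrier), Function.invFun θ v = fH ⟨v, hv⟩ := by
      intro v hv
      apply hθinj
      rw [Function.invFun_eq ⟨fH ⟨v, hv⟩, hθf _⟩, hθf]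
    refine ⟨?_, ?_, ?_, ?_⟩
    · intro v hv
      exact ⟨fH ⟨v, hv⟩, hθf _⟩
    · show K.one = θ 1
      rw [← map_one fH, hθf]
      exact (val_one K).symm
    · intro v hv w hw
      show K.mul v w = θ (Function.invFun θ v * Function.invFun θ w)
      rw [hinv v hv, hinv w hw, ← map_mul, hθf]
      exact (val_mul K ⟨v, hv⟩ ⟨w, hw⟩).symm
    · intro v hv
      show K.inv v = θ (Function.invFun θ v)⁻¹
      rw [hinv v hv, ← map_inv, hθf]
      exact (val_inv K ⟨v, hv⟩).symm
  · rw [card_ofInj]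
    exact hHle
  · refine ⟨⟨fH ⟨x, hx⟩, hθf _⟩, ⟨fH ⟨y, hy⟩, hθf _⟩, ?_⟩
    have := isConj_hom (ofInjEquiv θ hθinj).toMonoidHom hconj
    have ex : ofInjEquiv θ hθinj (fH ⟨x, hx⟩) = ⟨x, ⟨fH ⟨x, hx⟩, hθf _⟩⟩ :=
      Subtype.ext (hθf _)
    have ey : ofInjEquiv θ hθinj (fH ⟨y, hy⟩) = ⟨y, ⟨fH ⟨y, hy⟩, hθf _⟩⟩ :=
      Subtype.ext (hθf _)
    rwa [show (ofInjEquiv θ hθinj).toMonoidHom (fH ⟨x, hx⟩) =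
        ofInjEquiv θ hθinj (fH ⟨x, hx⟩) from rfl,
      show (ofInjEquiv θ hθinj).toMonoidHom (fH ⟨y, hy⟩) =
        ofInjEquiv θ hθinj (fH ⟨y, hy⟩) from rfl, ex, ey] at this

/-! ### The sweep by transfinite recursion -/

/-- The predicate characterising a good stage. -/
def GoodPG (κ : Cardinal.{u}) (K : PartialGroup V) (w : ↥K.carrier × ↥K.carrier)
    (prev : ∀ w', WellOrderingRel w' w → PartialGroup V) (K' : PartialGroup V) : Prop :=
  (∀ w' (hw : WellOrderingRel w' w), prev w' hw ≤ K') ∧ K ≤ K' ∧ K'.IsTF ∧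
    Cardinal.mk K'.carrier ≤ κ ∧
    ((w.1 : V) ≠ K.one → (w.2 : V) ≠ K.one → K'.ConjIn (w.1 : V) (w.2 : V))

open scoped Classical in
noncomputable def stagePG (κ : Cardinal.{u}) (K : PartialGroup V) :
    ↥K.carrier × ↥K.carrier → PartialGroup V :=
  WellFounded.fix IsWellFounded.wf
    (fun w prev => if h : ∃ K', GoodPG κ K w prev K' then h.choose else K)

open scoped Classical in
lemma stagePG_eq (κ : Cardinal.{u}) (K : PartialGroup V) (w : ↥K.carrier × ↥K.carrier) :
    stagePG κ K w = if h : ∃ K', GoodPG κ K w (fun w' _ => stagePG κ K w') K'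
      then h.choose else K :=
  WellFounded.fix_eq _ _ _

lemma goodPG_all [Infinite V] {κ : Cardinal.{u}} (hκ : ℵ₀ ≤ κ) (hκV : κ < #V)
    {K : PartialGroup V} (htf : K.IsTF) (hcard : #K.carrier ≤ κ) :
    ∀ w, GoodPG κ K w (fun w' _ => stagePG κ K w') (stagePG κ K w) := by
  classical
  intro w0
  have wfr : WellFounded (WellOrderingRel : (↥K.carrier × ↥K.carrier) →
      (↥K.carrier × ↥K.carrier) → Prop) := IsWellFounded.wf
  refine WellFounded.induction wfr
    (C := fun w => GoodPG κ K w (fun w' _ => stagePG κ K w') (stagePG κ K w)) w0 ?_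
  intro w IH
  -- the union of all previous stages, together with `K`
  set F : Option {w' // WellOrderingRel w' w} → PartialGroup V :=
    fun o => Option.elim o K (fun w' => stagePG κ K w'.1) with hF
  have hdir : Directed (· ≤ ·) F := by
    rintro (_ | ⟨w1, hw1⟩) (_ | ⟨w2, hw2⟩)
    · exact ⟨none, le_refl _, le_refl _⟩
    · exact ⟨some ⟨w2, hw2⟩, (IH w2 hw2).2.1, le_refl _⟩
    · exact ⟨some ⟨w1, hw1⟩, le_refl _, (IH w1 hw1).2.1⟩
    · rcases trichotomous_of WellOrderingRel w1 w2 with h | h | h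
      · exact ⟨some ⟨w2, hw2⟩, (IH w2 hw2).1 w1 h, le_refl _⟩
      · exact ⟨some ⟨w2, hw2⟩, by cases h; exact le_refl _, le_refl _⟩
      · exact ⟨some ⟨w1, hw1⟩, le_refl _, (IH w1 hw1).1 w2 h⟩
  set U : PartialGroup V := iUnionPG F hdir with hU
  have hKU : K ≤ U := le_iUnionPG F hdir none
  have hstU : ∀ w' (hw : WellOrderingRel w' w), stagePG κ K w' ≤ U :=
    fun w' hw => le_iUnionPG F hdir (some ⟨w', hw⟩)
  have htfU : U.IsTF := by
    refine isTF_iUnionPG F hdir ?_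
    rintro (_ | ⟨w', hw'⟩)
    · exact htf
    · exact (IH w' hw').2.2.1
  have hcardU : #U.carrier ≤ κ := by
    have h1 : #U.carrier ≤ #(Option {w' // WellOrderingRel w' w}) *
        ⨆ o, #((F o).carrier) := mk_iUnion_le _
    have h2 : #(Option {w' // WellOrderingRel w' w}) ≤ κ := by
      rw [mk_option]
      have h3 : #{w' // WellOrderingRel w' w} ≤ κ := by
        refine le_trans (mk_subtype_le _) ?_
        simp only [mk_prod, lift_id]
        calc #K.carrier * #K.carrier ≤ κ * κ := by
              exact mul_le_mul' hcard hcard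
          _ = κ := mul_eq_self hκ
      calc #{w' // WellOrderingRel w' w} + 1 ≤ κ + κ :=
            add_le_add h3 (le_trans (by norm_num) hκ)
        _ = κ := add_eq_self hκ
    have h4 : ⨆ o, #((F o).carrier) ≤ κ := by
      refine ciSup_le ?_
      rintro (_ | ⟨w', hw'⟩)
      · exact hcard
      · exact (IH w' hw').2.2.2.1
    calc #U.carrier ≤ _ * _ := h1
      _ ≤ κ * κ := mul_le_mul' h2 h4
      _ = κ := mul_eq_self hκ
  -- build a good partial group above `U`
  have hex : ∃ K', GoodPG κ K w (fun w' _ => stagePG κ K w') K' := by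
    by_cases hone : (w.1 : V) ≠ K.one ∧ (w.2 : V) ≠ K.one
    · obtain ⟨K', hUK', htfK', hcardK', hconjK'⟩ :=
        pg_step htfU (lt_of_le_of_lt hcardU hκV) (hKU.1 w.1.2) (hKU.1 w.2.2)
          (by rw [← hKU.2.1]; exact hone.1) (by rw [← hKU.2.1]; exact hone.2)
      exact ⟨K', fun w' hw => le_trans (hstU w' hw) hUK', le_trans hKU hUK', htfK',
        le_trans hcardK' hcardU, fun _ _ => hconjK'⟩
    · refine ⟨U, hstU, hKU, htfU, hcardU, fun h1 h2 => absurd ⟨h1, h2⟩ hone⟩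
  have hst : stagePG κ K w = hex.choose := by
    rw [stagePG_eq, dif_pos hex]
  rw [hst]
  exact hex.choose_spec

open scoped Classical in
lemma pg_sweep [Infinite V] {κ : Cardinal.{u}} (hκ : ℵ₀ ≤ κ) (hκV : κ < #V)
    {K : PartialGroup V} (htf : K.IsTF) (hcard : #K.carrier ≤ κ) :
    ∃ K' : PartialGroup V, K ≤ K' ∧ K'.IsTF ∧ #K'.carrier ≤ κ ∧
      ∀ x y : V, x ∈ K.carrier → y ∈ K.carrier → x ≠ K.one → y ≠ K.one →
        K'.ConjIn x y := by
  have hG := goodPG_all hκ hκV htf hcard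
  set F : Option (↥K.carrier × ↥K.carrier) → PartialGroup V :=
    fun o => Option.elim o K (fun w => stagePG κ K w) with hF
  have hdir : Directed (· ≤ ·) F := by
    rintro (_ | w1) (_ | w2)
    · exact ⟨none, le_refl _, le_refl _⟩
    · exact ⟨some w2, (hG w2).2.1, le_refl _⟩
    · exact ⟨some w1, le_refl _, (hG w1).2.1⟩
    · rcases trichotomous_of WellOrderingRel w1 w2 with h | h | h
      · exact ⟨some w2, (hG w2).1 w1 h, le_refl _⟩
      · exact ⟨some w2, by cases h; exact le_refl _, le_refl _⟩
      · exact ⟨some w1, le_refl _, (hG w1).1 w2 h⟩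
  refine ⟨iUnionPG F hdir, le_iUnionPG F hdir none, ?_, ?_, ?_⟩
  · refine isTF_iUnionPG F hdir ?_
    rintro (_ | w)
    · exact htf
    · exact (hG w).2.2.1
  · have h1 : #(iUnionPG F hdir).carrier ≤ #(Option (↥K.carrier × ↥K.carrier)) *
        ⨆ o, #((F o).carrier) := mk_iUnion_le _
    have h2 : #(Option (↥K.carrier × ↥K.carrier)) ≤ κ := by
      simp only [mk_option, mk_prod, lift_id]
      calc #K.carrier * #K.carrier + 1 ≤ κ * κ + κ :=
            add_le_add (mul_le_mul' hcard hcard) (le_trans (by norm_num) hκ)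
        _ = κ + κ := by rw [mul_eq_self hκ]
        _ = κ := add_eq_self hκ
    have h4 : ⨆ o, #((F o).carrier) ≤ κ := by
      refine ciSup_le ?_
      rintro (_ | w)
      · exact hcard
      · exact (hG w).2.2.2.1
    calc #(iUnionPG F hdir).carrier ≤ _ * _ := h1
      _ ≤ κ * κ := mul_le_mul' h2 h4
      _ = κ := mul_eq_self hκ
  · intro x y hx hy hx1 hy1
    have := (hG (⟨x, hx⟩, ⟨y, hy⟩)).2.2.2.2 hx1 hy1
    exact this.mono (le_iUnionPG F hdir (some (⟨x, hx⟩, ⟨y, hy⟩)))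

end PartialGroup


/-! ### Free groups are torsion free, and the main theorem -/

lemma freeGroup_eq_one_of_isEmpty {α : Type*} [IsEmpty α] (x : FreeGroup α) : x = 1 :=
  FreeGroup.induction_on x rfl (fun a => (IsEmpty.false a).elim)
    (fun a _ => (IsEmpty.false a).elim) (fun _ _ hx hy => by rw [hx, hy, one_mul])

lemma freeGroup_map_injective {α : Type v} {β : Type w} {σ : α → β}
    (hσ : Function.Injective σ) : Function.Injective (FreeGroup.map σ) := by
  classical
  cases isEmpty_or_nonempty α with
  | inl h =>
    intro x y _
    rw [freeGroup_eq_one_of_isEmpty x, freeGroup_eq_one_of_isEmpty y]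
  | inr h =>
    have h2 : (FreeGroup.map (Function.invFun σ)).comp (FreeGroup.map σ) =
        MonoidHom.id (FreeGroup α) := by
      apply FreeGroup.ext_hom
      intro a
      simp [Function.leftInverse_invFun hσ a]
    intro x y hxy
    have h3 := congr_arg (FreeGroup.map (Function.invFun σ)) hxy
    rw [← MonoidHom.comp_apply, ← MonoidHom.comp_apply, h2, MonoidHom.id_apply,
      MonoidHom.id_apply] at h3
    exact h3

open HNNExtension in
lemma freeGroup_fin_tf : ∀ n, Monoid.IsTorsionFree (FreeGroup (Fin n)) := by
  intro n
  induction n with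
  | zero =>
    intro x hx _
    exact hx (freeGroup_eq_one_of_isEmpty x)
  | succ n ih =>
    set Φ : FreeGroup (Fin (n + 1)) →*
        HNNExtension (FreeGroup (Fin n)) ⊥ ⊥ (MulEquiv.refl _) :=
      FreeGroup.lift (Fin.lastCases t (fun i => of (FreeGroup.of i))) with hΦ
    set Ψ : HNNExtension (FreeGroup (Fin n)) ⊥ ⊥ (MulEquiv.refl _) →*
        FreeGroup (Fin (n + 1)) :=
      HNNExtension.lift (FreeGroup.map Fin.castSucc) (FreeGroup.of (Fin.last n)) (by
        rintro ⟨a, ha⟩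
        have ha' : a = 1 := Subgroup.mem_bot.mp ha
        simp [ha']) with hΨ
    have hΨΦ : Ψ.comp Φ = MonoidHom.id _ := by
      apply FreeGroup.ext_hom
      intro a
      induction a using Fin.lastCases with
      | last => simp [hΦ, hΨ]
      | cast i => simp [hΦ, hΨ]
    have hid : ∀ z, Ψ (Φ z) = z := fun z => by
      rw [← MonoidHom.comp_apply, hΨΦ, MonoidHom.id_apply]
    have hΦinj : Function.Injective Φ := by
      intro x y hxy
      have h1 := congr_arg Ψ hxy
      rwa [hid, hid] at h1
    intro x hx hfin
    exact hnn_isTorsionFree (MulEquiv.refl _) ih (Φ x)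
      (fun h => hx (hΦinj (by rw [h, map_one])))
      (PartialGroup.isOfFinOrder_hom Φ hfin)

lemma freeGroup_tf (α : Type v) : Monoid.IsTorsionFree (FreeGroup α) := by
  classical
  intro x hx hfin
  set S : Finset α := (x.toWord.map Prod.fst).toFinset with hS
  have hmem : ∀ p ∈ x.toWord, p.1 ∈ S := by
    intro p hp
    rw [hS, List.mem_toFinset]
    exact List.mem_map_of_mem (f := Prod.fst) hp
  set L' : List (↥S × Bool) := x.toWord.attach.map
    (fun p => (⟨p.1.1, hmem p.1 p.2⟩, p.1.2)) with hL'
  set y : FreeGroup ↥S := FreeGroup.mk L' with hy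
  have hxy : FreeGroup.map (Subtype.val : ↥S → α) y = x := by
    rw [hy, FreeGroup.map.mk]
    have h1 : L'.map (fun q => ((q.1 : α), q.2)) = x.toWord := by
      rw [hL', List.map_map]
      have h2 : x.toWord.attach.map
          ((fun q : ↥S × Bool => ((q.1 : α), q.2)) ∘
            (fun p => (⟨p.1.1, hmem p.1 p.2⟩, p.1.2))) =
          x.toWord.attach.map (fun p => p.1) := by
        apply List.map_congr_left
        intro p _
        rfl
      rw [h2]
      exact List.attach_map_subtype_val _
    rw [h1, FreeGroup.mk_toWord]
  have hvinj : Function.Injective (FreeGroup.map (Subtype.val : ↥S → α)) :=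
    freeGroup_map_injective Subtype.val_injective
  have hy1 : y ≠ 1 := fun h => hx (by rw [← hxy, h, map_one])
  have hyfin : IsOfFinOrder y :=
    PartialGroup.isOfFinOrder_of_injective _ hvinj (by rwa [hxy])
  set e := Fintype.equivFin ↥S with he
  exact freeGroup_fin_tf (Fintype.card ↥S) (FreeGroup.map e y)
    (fun h => hy1 (freeGroup_map_injective e.injective (by rw [h, map_one])))
    (PartialGroup.isOfFinOrder_hom (FreeGroup.map e) hyfin)

lemma isSimpleGroup_of_conj {H : Type*} [Group H] [Nontrivial H]
    (h : ∀ x y : H, x ≠ 1 → y ≠ 1 → IsConj x y) : IsSimpleGroup H := by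
  refine ⟨fun N hN => ?_⟩
  rcases eq_or_ne N ⊥ with hbot | hbot
  · exact Or.inl hbot
  · right
    obtain ⟨⟨x, hxN⟩, hx1'⟩ := Subgroup.ne_bot_iff_exists_ne_one.mp hbot
    have hx1 : x ≠ 1 := fun h => hx1' (Subtype.ext h)
    rw [eq_top_iff]
    intro y _
    rcases eq_or_ne y 1 with rfl | hy1
    · exact N.one_mem
    · obtain ⟨c, hc⟩ := isConj_iff.mp (h x y hx1 hy1)
      rw [← hc]
      exact hN.conj_mem x hxN c

end HNNTF


open HNNTF HNNTF.PartialGroup Cardinal in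
/-- For an infinite set `B`, the free group on `B` embeds into a torsion-free
simple group. -/
theorem stmt6 (B : Type u) [Infinite B] :
    ∃ (H : Type u) (_ : Group H),
      Monoid.IsTorsionFree H ∧ IsSimpleGroup H ∧
      ∃ ι : FreeGroup B →* H, Function.Injective ι := by
  classical
  haveI : Infinite (FreeGroup B) :=
    Infinite.of_injective FreeGroup.of FreeGroup.of_injective
  haveI : Infinite (Set (FreeGroup B)) :=
    Infinite.of_injective (fun g => ({g} : Set (FreeGroup B))) Set.singleton_injective
  set κ : Cardinal.{u} := #(FreeGroup B) with hκdef
  have hκ : ℵ₀ ≤ κ := aleph0_le_mk _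
  have hκV : κ < #(Set (FreeGroup B)) := by
    rw [mk_set]
    exact cantor _
  set θ₀ : FreeGroup B → Set (FreeGroup B) := fun g => {g} with hθ₀def
  have hθ₀ : Function.Injective θ₀ := Set.singleton_injective
  set K₀ : PartialGroup (Set (FreeGroup B)) := ofInj θ₀ hθ₀ with hK₀
  have htf₀ : K₀.IsTF := isTF_ofInj θ₀ hθ₀ (freeGroup_tf B)
  have hcard₀ : #K₀.carrier ≤ κ := le_of_eq (card_ofInj θ₀ hθ₀)
  set T := {K : PartialGroup (Set (FreeGroup B)) // K.IsTF ∧ #K.carrier ≤ κ} with hT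
  set next : T → T := fun K =>
    ⟨(pg_sweep hκ hκV K.2.1 K.2.2).choose,
     (pg_sweep hκ hκV K.2.1 K.2.2).choose_spec.2.1,
     (pg_sweep hκ hκV K.2.1 K.2.2).choose_spec.2.2.1⟩ with hnext
  set chain : ℕ → T := fun n => next^[n] ⟨K₀, htf₀, hcard₀⟩ with hchain
  have hchainsucc : ∀ n, chain (n + 1) = next (chain n) := by
    intro n
    rw [hchain]
    exact Function.iterate_succ_apply' next n _
  have hle : ∀ n, (chain n).1 ≤ (chain (n + 1)).1 := by
    intro n
    rw [hchainsucc n]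
    exact (pg_sweep hκ hκV (chain n).2.1 (chain n).2.2).choose_spec.1
  have hconj : ∀ n, ∀ x y, x ∈ (chain n).1.carrier → y ∈ (chain n).1.carrier →
      x ≠ (chain n).1.one → y ≠ (chain n).1.one → (chain (n + 1)).1.ConjIn x y := by
    intro n
    rw [hchainsucc n]
    exact (pg_sweep hκ hκV (chain n).2.1 (chain n).2.2).choose_spec.2.2.2
  have hmono : Monotone (fun n => (chain n).1) := monotone_nat_of_le_succ hle
  have hdir : Directed (· ≤ ·) (fun n => (chain n).1) := hmono.directed_le
  set L := iUnionPG (fun n => (chain n).1) hdir with hL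
  have hLle : ∀ n, (chain n).1 ≤ L := le_iUnionPG _ hdir
  have htfL : L.IsTF := isTF_iUnionPG _ hdir (fun n => (chain n).2.1)
  set ι : FreeGroup B →* L.Grp :=
    (incl (hLle 0)).comp (ofInjEquiv θ₀ hθ₀).toMonoidHom with hι
  have hιinj : Function.Injective ι := by
    apply Function.Injective.comp (incl_injective (hLle 0))
    exact (ofInjEquiv θ₀ hθ₀).injective
  have hnontriv : Nontrivial L.Grp := by
    refine ⟨ι (FreeGroup.of (Classical.arbitrary B)), 1, fun h => ?_⟩
    have h1 : ι (FreeGroup.of (Classical.arbitrary B)) = ι 1 := by rw [h, map_one]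
    exact FreeGroup.of_ne_one _ (hιinj h1)
  have hallconj : ∀ x y : L.Grp, x ≠ 1 → y ≠ 1 → IsConj x y := by
    intro x y hx hy
    have hx2 : (x : Set (FreeGroup B)) ∈ ⋃ n, (chain n).1.carrier := x.2
    have hy2 : (y : Set (FreeGroup B)) ∈ ⋃ n, (chain n).1.carrier := y.2
    obtain ⟨n1, hx1⟩ := Set.mem_iUnion.mp hx2
    obtain ⟨n2, hy1⟩ := Set.mem_iUnion.mp hy2
    have hx1' : (x : Set (FreeGroup B)) ∈ (chain (max n1 n2)).1.carrier :=
      (hmono (le_max_left n1 n2)).1 hx1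
    have hy1' : (y : Set (FreeGroup B)) ∈ (chain (max n1 n2)).1.carrier :=
      (hmono (le_max_right n1 n2)).1 hy1
    have hone : (chain (max n1 n2)).1.one = L.one := (hLle _).2.1
    have hcc := hconj (max n1 n2) _ _ hx1' hy1'
      (fun h => hx (Subtype.ext (by rw [h, hone]; rfl)))
      (fun h => hy (Subtype.ext (by rw [h, hone]; rfl)))
    obtain ⟨hx', hy', hisconj⟩ := hcc.mono (hLle (max n1 n2 + 1))
    have ex : (⟨(x : Set (FreeGroup B)), hx'⟩ : L.Grp) = x := Subtype.ext rfl
    have ey : (⟨(y : Set (FreeGroup B)), hy'⟩ : L.Grp) = y := Subtype.ext rfl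
    rwa [ex, ey] at hisconj
  have hsimple : IsSimpleGroup L.Grp := @isSimpleGroup_of_conj _ _ hnontriv hallconj
  exact ⟨L.Grp, inferInstance, htfL, hsimple, ι, hιinj⟩
end
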